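/- arXiv:0807.1713 — 12 statements merged into one kernel-verified Lean document; each statement's English description precedes it below -/
import Mathlib

section
/- Fix τ ∈ ℝ with 0 < τ < 1 and r > 0. Define K : ℕ → ℂ → ℂ → ℂ recursively by K 1 η η′ = 1/(η′ − τ·η) and K (n+1) η η′ = (2πi)⁻¹ ∮_{|ζ|=r} (K 1 η ζ)·(K n ζ η′) dζ. Then for every n ≥ 1, every η ∈ ℂ with |η| ≤ r and every η′ ∈ ℂ with |η′| = r, one has K n η η′ = 1/(η′ − τⁿ·η); consequently, for every n ≥ 1, (2πi)⁻¹ ∮_{|η|=r} K n η η dη = 1/(1 − τⁿ). -/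
open Complex Real

/-- Powers of the kernel `K₀(η,η') = 1/(η' - τη)` and their traces
(Tracy–Widom, proof of Prop. 4): `K n η η' = 1/(η' - τⁿ η)` and
`tr K₀ⁿ = 1/(1 - τⁿ)`. -/
theorem stmt_2 (τ : ℝ) (hτ : 0 < τ) (hτ' : τ < 1) (r : ℝ) (hr : 0 < r)
    (K : ℕ → ℂ → ℂ → ℂ)
    (hK1 : ∀ η η' : ℂ, K 1 η η' = 1 / (η' - ↑τ * η))
    (hKrec : ∀ n : ℕ, 1 ≤ n → ∀ η η' : ℂ,
      K (n + 1) η η' =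
        (2 * ↑Real.pi * Complex.I)⁻¹ * ∮ ζ in C(0, r), (K 1 η ζ) * (K n ζ η')) :
    (∀ n : ℕ, 1 ≤ n → ∀ η : ℂ, ‖η‖ ≤ r → ∀ η' : ℂ, ‖η'‖ = r →
        K n η η' = 1 / (η' - (↑τ) ^ n * η)) ∧
    (∀ n : ℕ, 1 ≤ n →
        (2 * ↑Real.pi * Complex.I)⁻¹ * (∮ η in C(0, r), K n η η) =
          1 / (1 - (↑τ : ℂ) ^ n)) := by
  have hπ : (2 * (Real.pi : ℂ) * Complex.I) ≠ 0 := by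
    simp [Real.pi_ne_zero, Complex.I_ne_zero, Complex.ofReal_ne_zero]
  have hτn : ∀ n : ℕ, 1 ≤ n → τ ^ n < 1 := fun n hn =>
    pow_lt_one₀ hτ.le hτ' (by omega)
  -- denominator is nonzero
  have hden : ∀ n : ℕ, 1 ≤ n → ∀ η : ℂ, ‖η‖ ≤ r → ∀ η' : ℂ, ‖η'‖ = r →
      η' - (↑τ : ℂ) ^ n * η ≠ 0 := by
    intro n hn η hη η' hη'
    have h1 : ‖(↑τ : ℂ) ^ n * η‖ < r := by
      rw [norm_mul, norm_pow, Complex.norm_real, Real.norm_eq_abs, abs_of_pos hτ]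
      calc τ ^ n * ‖η‖ ≤ τ ^ n * r := by
            exact mul_le_mul_of_nonneg_left hη (pow_nonneg hτ.le n)
        _ < 1 * r := by exact mul_lt_mul_of_pos_right (hτn n hn) hr
        _ = r := one_mul r
    intro h
    rw [sub_eq_zero] at h
    rw [h] at hη'
    exact absurd hη' (ne_of_lt h1)
  have main : ∀ n : ℕ, 1 ≤ n → ∀ η : ℂ, ‖η‖ ≤ r → ∀ η' : ℂ, ‖η'‖ = r →
      K n η η' = 1 / (η' - (↑τ) ^ n * η) := by
    intro n
    induction n with
    | zero => omega
    | succ m ih =>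
      intro _ η hη η' hη'
      rcases Nat.eq_zero_or_pos m with hm | hm
      · subst hm; simpa using hK1 η η'
      · rw [hKrec m hm]
        set f : ℂ → ℂ := fun ζ => (η' - (↑τ : ℂ) ^ m * ζ)⁻¹ with hf
        have hτη : (↑τ : ℂ) * η ∈ Metric.ball (0 : ℂ) r := by
          rw [Metric.mem_ball, dist_zero_right]
          calc ‖(↑τ : ℂ) * η‖ = τ * ‖η‖ := by
                simp [abs_of_pos hτ]
            _ ≤ τ * r := mul_le_mul_of_nonneg_left hη hτ.le
            _ < 1 * r := mul_lt_mul_of_pos_right hτ' hr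
            _ = r := one_mul r
        have hdf : DifferentiableOn ℂ f (Metric.closedBall (0 : ℂ) r) := by
          apply DifferentiableOn.inv
          · exact ((differentiable_const _).sub
              (differentiable_id.const_mul _)).differentiableOn
          · intro ζ hζ
            rw [Metric.mem_closedBall, dist_zero_right] at hζ
            exact hden m hm ζ hζ η' hη'
        have hcauchy : (∮ ζ in C(0, r), (ζ - (↑τ : ℂ) * η)⁻¹ • f ζ)
            = (2 * ↑Real.pi * Complex.I : ℂ) • f ((↑τ : ℂ) * η) :=
          hdf.circleIntegral_sub_inv_smul hτη
        have hcongr : (∮ ζ in C(0, r), (K 1 η ζ) * (K m ζ η'))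
            = ∮ ζ in C(0, r), (ζ - (↑τ : ℂ) * η)⁻¹ • f ζ := by
          apply circleIntegral.integral_congr hr.le
          intro ζ hζ
          have hζ' : ‖ζ‖ = r := by
            simpa [Complex.dist_eq] using hζ
          show K 1 η ζ * K m ζ η' = (ζ - (↑τ : ℂ) * η)⁻¹ • f ζ
          rw [hK1, ih hm ζ hζ'.le η' hη', hf]
          simp [one_div, smul_eq_mul]
        rw [hcongr, hcauchy, smul_eq_mul, ← mul_assoc, inv_mul_cancel₀ hπ, one_mul]
        show (η' - (↑τ : ℂ) ^ m * ((↑τ : ℂ) * η))⁻¹ = 1 / (η' - (↑τ : ℂ) ^ (m + 1) * η)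
        rw [one_div]
        congr 1
        ring
  refine ⟨main, ?_⟩
  intro n hn
  have h1 : (1 : ℂ) - (↑τ : ℂ) ^ n ≠ 0 := by
    rw [sub_ne_zero]
    intro h
    have : ((τ ^ n : ℝ) : ℂ) = ((1 : ℝ) : ℂ) := by push_cast; rw [← h]
    exact absurd (Complex.ofReal_inj.mp this) (ne_of_lt (hτn n hn))
  have hcongr : (∮ η in C(0, r), K n η η)
      = ∮ η in C(0, r), (1 - (↑τ : ℂ) ^ n)⁻¹ • (η - 0)⁻¹ := by
    apply circleIntegral.integral_congr hr.le
    intro η hη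
    have hη' : ‖η‖ = r := by simpa [Complex.dist_eq] using hη
    have hη0 : η ≠ 0 := by
      intro h; rw [h] at hη'; simp at hη'; exact absurd hη'.symm hr.ne'
    show K n η η = (1 - (↑τ : ℂ) ^ n)⁻¹ • (η - 0)⁻¹
    rw [main n hn η hη'.le η hη']
    rw [smul_eq_mul, sub_zero]
    rw [one_div, ← mul_inv]
    congr 1
    ring
  rw [hcongr, circleIntegral.integral_smul, circleIntegral.integral_sub_inv_of_mem_ball
    (by simpa using hr), smul_eq_mul]
  field_simp
end

section
/- Fix τ, r ∈ ℝ with 0 < τ < 1 and 1 < r < τ⁻¹, fix x ∈ ℤ and t ∈ ℂ. Define φ(w) = ((1 − τw)/(1 − w))^x · exp((1/(1 − w) − 1/(1 − τw))·t) and φ_n(w) = ∏_{k=0}^{n−1} φ(τ^k·w). Define kernels K : ℕ → ℂ → ℂ → ℂ recursively by K 1 η η′ = φ(τη)/(η′ − τη) and K (n+1) η η′ = (2πi)⁻¹ ∮_{|ζ|=r} (K 1 η ζ)·(K n ζ η′) dζ. Then for every n ≥ 1, every η ∈ ℂ with |η| ≤ r and every η′ ∈ ℂ with |η′| = r, one has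 K n η η′ = φ_n(τη)/(η′ − τⁿ·η). -/
open Complex Real

/-- Proposition 5 of Tracy–Widom: the kernel of the n-th power of the operator
`K₁` with kernel `φ(τη)/(η' - τη)` is `φ_n(τη)/(η' - τⁿη)`, where
`φ_n(w) = ∏_{k=0}^{n-1} φ(τᵏ w)`. -/
theorem stmt_4 (τ r : ℝ) (hτ : 0 < τ) (hτ' : τ < 1)
    (hr : 1 < r) (hr' : r < τ⁻¹) (x : ℤ) (t : ℂ)
    (φ : ℂ → ℂ) (φn : ℕ → ℂ → ℂ)
    (hφ : ∀ w : ℂ, φ w = ((1 - ↑τ * w) / (1 - w)) ^ x *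
        Complex.exp ((1 / (1 - w) - 1 / (1 - ↑τ * w)) * t))
    (hφn : ∀ (n : ℕ) (w : ℂ), φn n w = ∏ k ∈ Finset.range n, φ ((↑τ : ℂ) ^ k * w))
    (K : ℕ → ℂ → ℂ → ℂ)
    (hK1 : ∀ η η' : ℂ, K 1 η η' = φ (↑τ * η) / (η' - ↑τ * η))
    (hKrec : ∀ n : ℕ, 1 ≤ n → ∀ η η' : ℂ,
      K (n + 1) η η' =
        (2 * ↑Real.pi * Complex.I)⁻¹ * ∮ ζ in C(0, r), (K 1 η ζ) * (K n ζ η')) :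
    ∀ n : ℕ, 1 ≤ n → ∀ η : ℂ, ‖η‖ ≤ r → ∀ η' : ℂ, ‖η'‖ = r →
      K n η η' = φn n (↑τ * η) / (η' - (↑τ : ℂ) ^ n * η) := by
  have hr0 : (0:ℝ) < r := lt_trans one_pos hr
  have hτr : τ * r < 1 := by
    have := (lt_inv_comm₀ hτ hr0).mpr hr'
    calc τ * r < τ * τ⁻¹ := by
          apply mul_lt_mul_of_pos_left _ hτ
          exact hr'
      _ = 1 := mul_inv_cancel₀ (ne_of_gt hτ)
  -- differentiability of φ inside the unit disc
  have hφdiff : ∀ w : ℂ, ‖w‖ < 1 → DifferentiableAt ℂ φ w := by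
    have hφ' : φ = fun w => ((1 - ↑τ * w) / (1 - w)) ^ x *
        Complex.exp ((1 / (1 - w) - 1 / (1 - ↑τ * w)) * t) := funext hφ
    intro w hw
    have h1 : (1 : ℂ) - w ≠ 0 := by
      intro h
      have : w = 1 := by linear_combination -h
      rw [this] at hw; simp at hw
    have h2 : (1 : ℂ) - ↑τ * w ≠ 0 := by
      intro h
      have habs : ‖(↑τ * w)‖ < 1 := by
        rw [norm_mul, Complex.norm_real, Real.norm_eq_abs, abs_of_pos hτ]
        calc τ * ‖w‖ ≤ 1 * ‖w‖ := by
              apply mul_le_mul_of_nonneg_right hτ'.le (norm_nonneg w)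
          _ = ‖w‖ := one_mul _
          _ < 1 := hw
      have : (↑τ : ℂ) * w = 1 := by linear_combination -h
      rw [this] at habs; simp at habs
    rw [hφ']
    have hd1 : DifferentiableAt ℂ (fun w : ℂ => (1 - ↑τ * w) / (1 - w)) w :=
      DifferentiableAt.div (by fun_prop) (by fun_prop) h1
    apply DifferentiableAt.mul
    · exact hd1.zpow (Or.inl (div_ne_zero h2 h1))
    · apply DifferentiableAt.cexp
      apply DifferentiableAt.mul _ (differentiableAt_const t)
      apply DifferentiableAt.sub
      · exact DifferentiableAt.div (differentiableAt_const 1) (by fun_prop) h1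
      · exact DifferentiableAt.div (differentiableAt_const 1) (by fun_prop) h2
  -- main induction
  intro n hn
  induction n, hn using Nat.le_induction with
  | base =>
    intro η hη η' hη'
    rw [hK1, hφn]
    simp [Finset.prod_range_one]
  | succ n hn IH =>
    intro η hη η' hη'
    rw [hKrec n hn]
    set g : ℂ → ℂ := fun ζ => φ (↑τ * η) * (φn n (↑τ * ζ) * (η' - (↑τ:ℂ) ^ n * ζ)⁻¹) with hg
    -- choose a slightly larger radius
    set R : ℝ := (r + τ⁻¹) / 2 with hR
    have hrR : r < R := by rw [hR]; linarith
    have hRτ : τ * R < 1 := by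
      have : R < τ⁻¹ := by rw [hR]; linarith
      calc τ * R < τ * τ⁻¹ := by exact mul_lt_mul_of_pos_left this hτ
        _ = 1 := mul_inv_cancel₀ (ne_of_gt hτ)
    -- denominator nonvanishing on ball 0 R
    have hden : ∀ ζ : ℂ, ‖ζ‖ < R → η' - (↑τ:ℂ) ^ n * ζ ≠ 0 := by
      intro ζ hζ h
      have : η' = (↑τ:ℂ) ^ n * ζ := by linear_combination h
      have habs : ‖η'‖ = τ ^ n * ‖ζ‖ := by
        rw [this, norm_mul, norm_pow, Complex.norm_real, Real.norm_eq_abs, abs_of_pos hτ]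
      have h1 : τ ^ n * ‖ζ‖ < 1 := by
        calc τ ^ n * ‖ζ‖ ≤ τ * ‖ζ‖ := by
              apply mul_le_mul_of_nonneg_right _ (norm_nonneg ζ)
              calc τ ^ n ≤ τ ^ 1 := pow_le_pow_of_le_one hτ.le hτ'.le hn
                _ = τ := pow_one τ
          _ ≤ τ * R := by
              apply mul_le_mul_of_nonneg_left hζ.le hτ.le
          _ < 1 := hRτ
      rw [hη'] at habs
      linarith
    -- g is differentiable on ball 0 R
    have hgdiff : ∀ ζ : ℂ, ‖ζ‖ < R → DifferentiableAt ℂ g ζ := by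
      intro ζ hζ
      apply DifferentiableAt.const_mul
      apply DifferentiableAt.mul
      · have heq : (fun ζ : ℂ => φn n (↑τ * ζ)) =
            fun ζ : ℂ => ∏ k ∈ Finset.range n, φ ((↑τ:ℂ) ^ k * (↑τ * ζ)) := by
          funext ζ; exact hφn n (↑τ * ζ)
        rw [heq]
        apply DifferentiableAt.fun_finsetProd
        intro k _
        apply DifferentiableAt.comp
        · apply hφdiff
          rw [norm_mul, norm_mul, norm_pow, Complex.norm_real, Real.norm_eq_abs, abs_of_pos hτ]
          calc τ ^ k * (τ * ‖ζ‖) ≤ 1 * (τ * ‖ζ‖) := by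
                apply mul_le_mul_of_nonneg_right (pow_le_one₀ hτ.le hτ'.le)
                positivity
            _ = τ * ‖ζ‖ := one_mul _
            _ ≤ τ * R := mul_le_mul_of_nonneg_left hζ.le hτ.le
            _ < 1 := hRτ
        · fun_prop
      · exact DifferentiableAt.inv (by fun_prop) (hden ζ hζ)
    have hgd : DiffContOnCl ℂ g (Metric.ball 0 r) := by
      apply DifferentiableOn.diffContOnCl
      intro ζ hζ
      apply (hgdiff ζ _).differentiableWithinAt
      rw [closure_ball (0:ℂ) (ne_of_gt hr0)] at hζ
      simp only [Metric.mem_closedBall, dist_zero_right] at hζ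
      calc ‖ζ‖ = ‖ζ‖ := rfl
        _ ≤ r := hζ
        _ < R := hrR
    have hτη : ↑τ * η ∈ Metric.ball (0:ℂ) r := by
      simp only [Metric.mem_ball, dist_zero_right]
      calc ‖(↑τ:ℂ) * η‖ = τ * ‖η‖ := by
            rw [norm_mul, Complex.norm_real, Real.norm_eq_abs, abs_of_pos hτ]
        _ ≤ τ * r := mul_le_mul_of_nonneg_left hη hτ.le
        _ < 1 := hτr
        _ < r := hr
    -- rewrite the integrand
    have hcongr : (∮ ζ in C(0, r), (K 1 η ζ) * (K n ζ η')) =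
        ∮ ζ in C(0, r), (ζ - ↑τ * η)⁻¹ • g ζ := by
      apply circleIntegral.integral_congr hr0.le
      intro ζ hζ
      have hζr : ‖ζ‖ = r := by
        simpa using mem_sphere_zero_iff_norm.mp hζ
      show K 1 η ζ * K n ζ η' = (ζ - ↑τ * η)⁻¹ • g ζ
      rw [hK1, IH ζ (le_of_eq hζr) η' hη']
      simp only [hg, smul_eq_mul, div_eq_mul_inv]
      ring
    rw [hcongr, hgd.circleIntegral_sub_inv_smul hτη]
    have h2pi : (2 * ↑Real.pi * Complex.I : ℂ) ≠ 0 := by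
      simp [Real.pi_ne_zero, Complex.I_ne_zero]
    rw [smul_eq_mul, ← mul_assoc, inv_mul_cancel₀ h2pi, one_mul]
    -- final algebra
    have hsplit : φn (n + 1) (↑τ * η) = φn n (↑τ * (↑τ * η)) * φ (↑τ * η) := by
      rw [hφn (n+1), Finset.prod_range_succ', hφn n, pow_zero, one_mul]
      congr 1
      apply Finset.prod_congr rfl
      intro k _
      congr 1
      ring
    rw [hsplit, hg]
    have : (↑τ:ℂ) ^ (n + 1) * η = (↑τ:ℂ) ^ n * (↑τ * η) := by ring
    rw [this, div_eq_mul_inv]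
    ring
end

section
/- Let m, x ∈ ℤ with m ≥ 1 and x > m, let r ∈ ℝ with r > 1, and let t ∈ ℂ. Then ∮_{|ζ|=r} (1 − ζ)^{−x} · exp(t·ζ/(1 − ζ)) · ζ^{m−1} dζ = 0. -/
open Complex Real

/-- Vanishing contour integral (Tracy–Widom, proof of Theorem 1):
`∮_{|ζ|=r} (1-ζ)^{-x} e^{tζ/(1-ζ)} ζ^{m-1} dζ = 0` when `x > m ≥ 1`. -/
theorem stmt_6 (m x : ℤ) (hm : 1 ≤ m) (hx : m < x) (r : ℝ) (hr : 1 < r) (t : ℂ) :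
    (∮ ζ in C(0, r),
        (1 - ζ) ^ (-x) * Complex.exp (t * ζ / (1 - ζ)) * ζ ^ (m - 1)) = 0 := by
  set f : ℂ → ℂ := fun ζ => (1 - ζ) ^ (-x) * Complex.exp (t * ζ / (1 - ζ)) * ζ ^ (m - 1)
    with hfdef
  have hr0 : (0:ℝ) < r := lt_trans one_pos hr
  -- differentiability away from the closed unit disk
  have hdiff : ∀ ζ : ℂ, 1 < ‖ζ‖ → DifferentiableAt ℂ f ζ := by
    intro ζ hζ
    have hζ0 : ζ ≠ 0 := by
      intro h; rw [h] at hζ; simp at hζ; linarith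
    have hζ1 : (1 : ℂ) - ζ ≠ 0 := by
      intro h
      have : (1:ℂ) = ζ := by linear_combination h
      rw [← this] at hζ; simp at hζ
    have h1 : DifferentiableAt ℂ (fun ζ : ℂ => (1 - ζ) ^ (-x)) ζ := by
      exact (differentiableAt_zpow.2 (Or.inl hζ1)).comp ζ
        ((differentiableAt_const _).sub differentiableAt_id)
    have h2 : DifferentiableAt ℂ (fun ζ : ℂ => Complex.exp (t * ζ / (1 - ζ))) ζ := by
      apply Complex.differentiableAt_exp.comp
      exact ((differentiableAt_const t).mul differentiableAt_id).div
        ((differentiableAt_const _).sub differentiableAt_id) hζ1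
    have h3 : DifferentiableAt ℂ (fun ζ : ℂ => ζ ^ (m - 1)) ζ :=
      differentiableAt_zpow.2 (Or.inl hζ0)
    exact (h1.mul h2).mul h3
  -- the circle integral is independent of the radius ≥ r
  have key : ∀ R : ℝ, r ≤ R → (∮ ζ in C(0, R), f ζ) = ∮ ζ in C(0, r), f ζ := by
    intro R hR
    apply circleIntegral_eq_of_differentiable_on_annulus_off_countable hr0 hR
      Set.countable_empty
    · intro z hz
      have hz1 : 1 < ‖z‖ := by
        have := hz.2
        simp only [Metric.mem_ball, Complex.dist_eq, sub_zero, not_lt] at this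
        calc (1:ℝ) < r := hr
          _ ≤ ‖z‖ := this
      exact (hdiff z hz1).continuousAt.continuousWithinAt
    · intro z hz
      apply hdiff
      have := hz.1.2
      simp only [Metric.mem_closedBall, Complex.dist_eq, sub_zero, not_le] at this
      calc (1:ℝ) < r := hr
        _ < ‖z‖ := this
  -- the norm bound for large radius
  set K : ℝ := 2 * π * 2 ^ x * Real.exp (2 * ‖t‖) with hK
  have hKpos : 0 < K := by positivity
  have hbound : ∀ R : ℝ, max r 2 ≤ R → ‖∮ ζ in C(0, r), f ζ‖ ≤ K / R := by
    intro R hR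
    have hR2 : (2:ℝ) ≤ R := le_trans (le_max_right _ _) hR
    have hRr : r ≤ R := le_trans (le_max_left _ _) hR
    have hR1 : (1:ℝ) ≤ R := by linarith
    have hR0 : (0:ℝ) < R := by linarith
    rw [← key R hRr]
    set Cb : ℝ := (R/2) ^ (-x) * Real.exp (2 * ‖t‖) * R ^ (m - 1) with hCb
    have hptwise : ∀ z ∈ Metric.sphere (0:ℂ) R, ‖f z‖ ≤ Cb := by
      intro z hz
      have hzR : ‖z‖ = R := by
        simpa [Complex.dist_eq] using hz
      have hz1 : (1:ℝ) < ‖z‖ := by rw [hzR]; linarith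
      have hsub : R / 2 ≤ ‖(1:ℂ) - z‖ := by
        have h1 : ‖z‖ - ‖(1:ℂ)‖ ≤ ‖(1:ℂ) - z‖ := by
          rw [norm_sub_rev]; exact norm_sub_norm_le _ _
        simp only [norm_one] at h1
        rw [hzR] at h1
        linarith
      have hsub0 : (0:ℝ) < ‖(1:ℂ) - z‖ := lt_of_lt_of_le (by linarith) hsub
      have hnorm : ‖f z‖ = ‖(1:ℂ) - z‖ ^ (-x) * ‖Complex.exp (t * z / (1 - z))‖ * ‖z‖ ^ (m-1) := by
        simp [hfdef, norm_zpow]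
      rw [hnorm, hzR]
      have hxe : ‖(1:ℂ) - z‖ ^ (-x) ≤ (R/2) ^ (-x) := by
        rw [zpow_neg, zpow_neg]
        apply inv_anti₀
        · positivity
        · have hx0 : (0:ℤ) ≤ x := by linarith
          obtain ⟨n, rfl⟩ := Int.eq_ofNat_of_zero_le hx0
          rw [zpow_natCast, zpow_natCast]
          exact pow_le_pow_left₀ (by positivity) hsub n
      have he : ‖Complex.exp (t * z / (1 - z))‖ ≤ Real.exp (2 * ‖t‖) := by
        rw [Complex.norm_exp]
        apply Real.exp_le_exp.2
        calc (t * z / (1 - z)).re ≤ ‖t * z / (1 - z)‖ := Complex.re_le_norm _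
          _ = ‖t‖ * ‖z‖ / ‖(1:ℂ) - z‖ := by simp [norm_div, norm_mul]
          _ ≤ ‖t‖ * R / (R/2) := by
              rw [hzR]
              apply div_le_div₀ (by positivity) le_rfl (by linarith) hsub
          _ = 2 * ‖t‖ := by field_simp
      calc ‖(1:ℂ) - z‖ ^ (-x) * ‖Complex.exp (t * z / (1 - z))‖ * R ^ (m-1)
          ≤ (R/2) ^ (-x) * Real.exp (2 * ‖t‖) * R ^ (m-1) := by
            apply mul_le_mul_of_nonneg_right _ (by positivity)
            apply mul_le_mul hxe he (norm_nonneg _) (by positivity)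
        _ = Cb := rfl
    have h2 := circleIntegral.norm_integral_le_of_norm_le_const (le_of_lt hR0) hptwise
    refine le_trans h2 ?_
    -- 2πR * Cb ≤ K / R
    have harith : 2 * π * R * Cb ≤ K / R := by
      rw [hCb, hK]
      have hRne : R ≠ 0 := ne_of_gt hR0
      have h1 : (R/2:ℝ) ^ (-x) = 2 ^ x * R ^ (-x) := by
        rw [div_zpow, zpow_neg, zpow_neg, div_eq_mul_inv, inv_inv, mul_comm]
      rw [h1]
      have h2' : R * (R ^ (-x) * R ^ (m - 1)) = R ^ (m - x) := by
        rw [show m - x = 1 + (-x) + (m - 1) by ring, zpow_add₀ hRne, zpow_add₀ hRne,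
          zpow_one]
        ring
      have h3 : R ^ (m - x) ≤ R ^ (-1 : ℤ) := by
        apply zpow_le_zpow_right₀ hR1
        omega
      have h4 : R ^ (-1:ℤ) = 1 / R := by
        rw [zpow_neg, zpow_one, one_div]
      calc 2 * π * R * (2 ^ x * R ^ (-x) * Real.exp (2 * ‖t‖) * R ^ (m - 1))
          = 2 * π * 2 ^ x * Real.exp (2 * ‖t‖) * (R * (R ^ (-x) * R ^ (m-1))) := by ring
        _ = 2 * π * 2 ^ x * Real.exp (2 * ‖t‖) * R ^ (m - x) := by rw [h2']
        _ ≤ 2 * π * 2 ^ x * Real.exp (2 * ‖t‖) * R ^ (-1:ℤ) := by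
            apply mul_le_mul_of_nonneg_left h3 (by positivity)
        _ = 2 * π * 2 ^ x * Real.exp (2 * ‖t‖) / R := by rw [h4]; ring
    exact harith
  -- conclude
  by_contra hI
  have hIpos : 0 < ‖∮ ζ in C(0, r), f ζ‖ := norm_pos_iff.2 hI
  set I := ∮ ζ in C(0, r), f ζ
  set R := max (max r 2) (K / ‖I‖ + 1) with hRdef
  have hRge : max r 2 ≤ R := le_max_left _ _
  have hRbig : K / ‖I‖ + 1 ≤ R := le_max_right _ _
  have hR0 : (0:ℝ) < R := by
    have : (2:ℝ) ≤ max r 2 := le_max_right _ _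
    linarith [le_trans this hRge]
  have := hbound R hRge
  have hcontr : K / R < ‖I‖ := by
    rw [div_lt_iff₀ hR0]
    have hKI : K / ‖I‖ < R := by linarith
    calc K = K / ‖I‖ * ‖I‖ := (div_mul_cancel₀ K (ne_of_gt hIpos)).symm
      _ < R * ‖I‖ := by
          apply mul_lt_mul_of_pos_right hKI hIpos
      _ = ‖I‖ * R := by ring
  linarith
end

section
/- Let m, x ∈ ℤ with 1 ≤ x ≤ m, let r ∈ ℝ with r > 1, and let t ∈ ℂ. Then (2πi)⁻¹ ∮_{|ζ|=r} (1 − ζ)^{−x} · exp(t·ζ/(1 − ζ)) · ζ^{m−1} dζ = e^{−t} · ∑_{j=0}^{m−x} (−1)^{x+j} · C(m−1, x+j−1) · t^j/j!, where C(·,·) denotes the binomial coefficient. In particular the integral equals e^{−t} times a polynomial in t of degree m − x with leading coefficient (−1)^m/(m−x)!. -/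
open Complex Real

private lemma two_pi_I_ne : (2 * ↑Real.pi * Complex.I : ℂ) ≠ 0 := by
  simp [Real.pi_ne_zero, Complex.I_ne_zero, Complex.ofReal_ne_zero]

private lemma circ_one_sub {r : ℝ} (hr : 1 < r) (q : ℤ) :
    (∮ ζ in C(0, r), (1 - ζ) ^ q) =
      if q = -1 then -(2 * ↑Real.pi * Complex.I) else 0 := by
  have h1 : (1 : ℂ) ∈ Metric.ball (0 : ℂ) r := by
    simpa [Metric.mem_ball] using hr
  split_ifs with h
  · subst h
    have hfun : (fun ζ : ℂ => (1 - ζ) ^ (-1 : ℤ)) =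
        fun ζ : ℂ => (-1 : ℂ) * (ζ - 1)⁻¹ := by
      funext ζ
      rw [zpow_neg_one, ← neg_sub ζ 1, inv_neg, neg_one_mul]
    rw [hfun, circleIntegral.integral_const_mul,
      circleIntegral.integral_sub_inv_of_mem_ball h1, neg_one_mul]
  · have hfun : (fun ζ : ℂ => (1 - ζ) ^ q) =
        fun ζ : ℂ => (-1 : ℂ) ^ q * (ζ - 1) ^ q := by
      funext ζ
      rw [← neg_sub ζ 1]
      rcases Int.even_or_odd q with hq | hq
      · rw [hq.neg_zpow, hq.neg_one_zpow, one_mul]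
      · rw [hq.neg_zpow, hq.neg_one_zpow, neg_one_mul]
    rw [hfun, circleIntegral.integral_const_mul,
      circleIntegral.integral_sub_zpow_of_ne h, mul_zero]

private lemma circ_sum {ι : Type*} (s : Finset ι) (F : ι → ℂ → ℂ) (c : ℂ) (R : ℝ)
    (h : ∀ i ∈ s, CircleIntegrable (F i) c R) :
    (∮ z in C(c, R), ∑ i ∈ s, F i z) = ∑ i ∈ s, ∮ z in C(c, R), F i z := by
  simp only [circleIntegral, Finset.smul_sum]
  exact intervalIntegral.integral_finset_sum fun i hi => (h i hi).out

private lemma sphere_ne {r : ℝ} (hr : 1 < r) :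
    ∀ ζ ∈ Metric.sphere (0 : ℂ) r, (1 : ℂ) - ζ ≠ 0 := by
  intro ζ hζ h
  rw [mem_sphere_zero_iff_norm] at hζ
  rw [sub_eq_zero] at h
  rw [← h] at hζ
  simp at hζ
  linarith

private lemma circ_pow {r : ℝ} (hr : 1 < r) (N P : ℕ) (hP : 1 ≤ P) :
    (∮ ζ in C(0, r), ((1 - ζ) ^ P)⁻¹ * ζ ^ N) =
      if P ≤ N + 1 then
        (-1 : ℂ) ^ P * (N.choose (P - 1) : ℂ) * (2 * ↑Real.pi * Complex.I)
      else 0 := by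
  have hr0 : (0 : ℝ) ≤ r := by linarith
  have hne := sphere_ne hr
  have key : Set.EqOn (fun ζ : ℂ => ((1 - ζ) ^ P)⁻¹ * ζ ^ N)
      (fun ζ : ℂ => ∑ i ∈ Finset.range (N + 1),
        ((N.choose i : ℂ) * (-1) ^ i) * (1 - ζ) ^ ((i : ℤ) - (P : ℤ)))
      (Metric.sphere 0 r) := by
    intro ζ hζ
    have hw := hne ζ hζ
    simp only
    have hz : ζ ^ N = ∑ i ∈ Finset.range (N + 1),
        ((N.choose i : ℂ) * (-1) ^ i) * (1 - ζ) ^ i := by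
      have h1 : ζ = -(1 - ζ) + 1 := by ring
      calc ζ ^ N = (-(1 - ζ) + 1) ^ N := by rw [← h1]
        _ = ∑ i ∈ Finset.range (N + 1),
            (-(1 - ζ)) ^ i * 1 ^ (N - i) * (N.choose i) := add_pow _ _ _
        _ = _ := Finset.sum_congr rfl fun i _ => by rw [neg_pow]; ring
    rw [hz, Finset.mul_sum]
    refine Finset.sum_congr rfl fun i _ => ?_
    rw [zpow_sub₀ hw, zpow_natCast, zpow_natCast, div_eq_mul_inv]
    ring
  rw [circleIntegral.integral_congr hr0 key]
  rw [circ_sum (Finset.range (N + 1))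
    (fun i ζ => ((N.choose i : ℂ) * (-1) ^ i) * (1 - ζ) ^ ((i : ℤ) - (P : ℤ))) 0 r
    (fun i _ => (ContinuousOn.circleIntegrable hr0
      (continuousOn_const.mul (((continuous_const.sub continuous_id).continuousOn).zpow₀ _
        fun ζ hζ => Or.inl (hne ζ hζ)))))]
  have hterm : ∀ i ∈ Finset.range (N + 1),
      (∮ ζ in C(0, r), ((N.choose i : ℂ) * (-1) ^ i) * (1 - ζ) ^ ((i : ℤ) - (P : ℤ))) =
        if i = P - 1 then
          ((N.choose i : ℂ) * (-1) ^ i) * -(2 * ↑Real.pi * Complex.I) else 0 := by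
    intro i _
    rw [circleIntegral.integral_const_mul, circ_one_sub hr]
    have hcond : ((i : ℤ) - (P : ℤ) = -1) = (i = P - 1) := by
      apply propext; omega
    rw [mul_ite, mul_zero]
    simp only [hcond]
  rw [Finset.sum_congr rfl hterm, Finset.sum_ite_eq' (Finset.range (N + 1))]
  have hmem : (P - 1 ∈ Finset.range (N + 1)) ↔ P ≤ N + 1 := by
    rw [Finset.mem_range]; omega
  split_ifs with h1 h2 h2
  · have hsign : ((-1 : ℂ)) ^ P = (-1) ^ (P - 1) * (-1) := by
      conv_lhs => rw [show P = P - 1 + 1 by omega]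
      rw [pow_succ]
    rw [hsign]
    ring
  · exact absurd (hmem.mp h1) h2
  · exact absurd (hmem.mpr h2) h1
  · rfl


/-- Explicit residue evaluation (Tracy–Widom, proof of Theorem 1):
`(2πi)⁻¹ ∮_{|ζ|=r} (1-ζ)^{-x} e^{tζ/(1-ζ)} ζ^{m-1} dζ
  = e^{-t} ∑_{j=0}^{m-x} (-1)^{x+j} C(m-1, x+j-1) tʲ/j!` for `1 ≤ x ≤ m`. -/
theorem stmt_7 (m x : ℤ) (hx : 1 ≤ x) (hxm : x ≤ m) (r : ℝ) (hr : 1 < r) (t : ℂ) :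
    (2 * ↑Real.pi * Complex.I)⁻¹ *
      (∮ ζ in C(0, r),
        (1 - ζ) ^ (-x) * Complex.exp (t * ζ / (1 - ζ)) * ζ ^ (m - 1)) =
      Complex.exp (-t) *
        ∑ j ∈ Finset.range ((m - x).toNat + 1),
          (-1 : ℂ) ^ (x + (j : ℤ)) *
            (Nat.choose (m - 1).toNat (x + (j : ℤ) - 1).toNat : ℂ) *
            t ^ j / (Nat.factorial j : ℂ) := by
  have hr0 : (0 : ℝ) ≤ r := by linarith
  have hne := sphere_ne hr
  set X := x.toNat with hXdef
  set N := (m - 1).toNat with hNdef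
  set M := (m - x).toNat with hMdef
  have hXx : (X : ℤ) = x := Int.toNat_of_nonneg (by omega)
  have hNm : (N : ℤ) = m - 1 := Int.toNat_of_nonneg (by omega)
  have hMm : (M : ℤ) = m - x := Int.toNat_of_nonneg (by omega)
  have hX1 : 1 ≤ X := by omega
  have hNXM : N + 1 = X + M := by omega
  set f : ℕ → ℂ → ℂ :=
    fun k ζ => t ^ k / (k.factorial : ℂ) * (((1 - ζ) ^ (X + k))⁻¹ * ζ ^ N) with hf
  set S : ℂ → ℂ :=
    fun ζ => Complex.exp (t / (1 - ζ)) * (((1 - ζ) ^ X)⁻¹ * ζ ^ N) with hSdef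
  -- pointwise HasSum of the series
  have hS : ∀ ζ : ℂ, 1 - ζ ≠ 0 → HasSum (fun k => f k ζ) (S ζ) := by
    intro ζ hw
    have hexp : HasSum (fun k : ℕ => (t / (1 - ζ)) ^ k / (k.factorial : ℂ))
        (Complex.exp (t / (1 - ζ))) := by
      rw [Complex.exp_eq_exp_ℂ]
      exact NormedSpace.expSeries_div_hasSum_exp _
    have h2 := hexp.mul_right (((1 - ζ) ^ X)⁻¹ * ζ ^ N)
    have hfun : (fun k : ℕ => (t / (1 - ζ)) ^ k / (k.factorial : ℂ) *
        (((1 - ζ) ^ X)⁻¹ * ζ ^ N)) = fun k => f k ζ := by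
      funext k
      simp only [hf]
      rw [div_pow, pow_add, mul_inv]
      ring
    rwa [hfun] at h2
  have hcm : ∀ θ : ℝ, (1 : ℂ) - circleMap 0 r θ ≠ 0 := by
    intro θ
    refine sub_ne_zero.2 fun h => ?_
    exact circleMap_ne_mem_ball
      (by simpa [Metric.mem_ball] using hr : (1 : ℂ) ∈ Metric.ball (0 : ℂ) r) θ h.symm
  have habs : ∀ θ : ℝ, ‖circleMap 0 r θ‖ = r := by
    intro θ
    simp [norm_circleMap_zero, _root_.abs_of_nonneg hr0]
  have hlow : ∀ θ : ℝ, r - 1 ≤ ‖(1 : ℂ) - circleMap 0 r θ‖ := by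
    intro θ
    calc r - 1 = ‖circleMap 0 r θ‖ - ‖(1 : ℂ)‖ := by rw [habs θ]; simp
      _ ≤ ‖circleMap 0 r θ - 1‖ := norm_sub_norm_le _ _
      _ = ‖(1 : ℂ) - circleMap 0 r θ‖ := (norm_sub_rev _ _)
  set bound : ℕ → ℝ :=
    fun k => r * (‖t‖ ^ k / k.factorial * (((r - 1) ^ (X + k))⁻¹ * r ^ N)) with hbound
  have hbsum : Summable bound := by
    have h1 : Summable (fun k : ℕ =>
        (r * r ^ N * ((r - 1) ^ X)⁻¹) * ((‖t‖ / (r - 1)) ^ k / k.factorial)) :=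
      (Real.summable_pow_div_factorial _).mul_left _
    refine h1.congr fun k => ?_
    simp only [hbound]
    rw [pow_add, mul_inv, div_pow]
    ring
  have hHS : HasSum (fun k => ∮ ζ in C(0, r), f k ζ) (∮ ζ in C(0, r), S ζ) := by
    unfold circleIntegral
    apply intervalIntegral.hasSum_integral_of_dominated_convergence
      (fun k _ => bound k)
    · intro k
      apply Continuous.aestronglyMeasurable
      simp only [deriv_circleMap, hf]
      exact ((continuous_circleMap 0 r).mul continuous_const).smul
        (continuous_const.mul ((((continuous_const.sub (continuous_circleMap 0 r)).pow
          (X + k)).inv₀ fun θ => pow_ne_zero _ (hcm θ)).mul ((continuous_circleMap 0 r).pow N)))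
    · intro k
      filter_upwards with θ _
      have hnorm : ‖deriv (circleMap 0 r) θ • f k (circleMap 0 r θ)‖ =
          r * (‖t‖ ^ k / k.factorial *
            ((‖(1 : ℂ) - circleMap 0 r θ‖ ^ (X + k))⁻¹ * r ^ N)) := by
        rw [norm_smul, deriv_circleMap]
        simp only [hf]
        rw [norm_mul, norm_mul, norm_div, norm_pow, norm_mul, norm_inv, norm_pow, norm_pow,
          habs θ]
        simp [_root_.abs_of_nonneg hr0, norm_circleMap_zero]
      rw [hnorm, hbound]
      have hr1 : (0 : ℝ) < r - 1 := by linarith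
      have hle : (((‖(1 : ℂ) - circleMap 0 r θ‖) ^ (X + k))⁻¹ : ℝ) ≤
          (((r - 1) ^ (X + k))⁻¹ : ℝ) := by
        apply inv_anti₀ (pow_pos hr1 _)
        exact pow_le_pow_left₀ hr1.le (hlow θ) _
      have h0 : (0:ℝ) ≤ ‖t‖ ^ k / k.factorial := by positivity
      exact mul_le_mul_of_nonneg_left (mul_le_mul_of_nonneg_left
        (mul_le_mul_of_nonneg_right hle (by positivity)) h0) hr0
    · exact Filter.Eventually.of_forall fun θ _ => hbsum
    · exact intervalIntegrable_const
    · filter_upwards with θ _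
      exact (hS _ (hcm θ)).const_smul _
  have hint : ∀ k : ℕ, (∮ ζ in C(0, r), f k ζ) =
      t ^ k / (k.factorial : ℂ) * (if X + k ≤ N + 1 then
        (-1 : ℂ) ^ (X + k) * (N.choose (X + k - 1) : ℂ) * (2 * ↑Real.pi * Complex.I)
      else 0) := by
    intro k
    simp only [hf]
    rw [circleIntegral.integral_const_mul, circ_pow hr N (X + k) (by omega)]
  have hLHS : (∮ ζ in C(0, r),
      (1 - ζ) ^ (-x) * Complex.exp (t * ζ / (1 - ζ)) * ζ ^ (m - 1)) =
      Complex.exp (-t) * ∮ ζ in C(0, r), S ζ := by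
    rw [← circleIntegral.integral_const_mul]
    apply circleIntegral.integral_congr hr0
    intro ζ hζ
    have hw := hne ζ hζ
    simp only [hSdef]
    have h1 : (1 - ζ) ^ (-x) = ((1 - ζ) ^ X)⁻¹ := by
      rw [← hXx, zpow_neg, zpow_natCast]
    have h2 : ζ ^ (m - 1) = ζ ^ N := by rw [← hNm, zpow_natCast]
    have h3 : Complex.exp (t * ζ / (1 - ζ)) =
        Complex.exp (-t) * Complex.exp (t / (1 - ζ)) := by
      rw [← Complex.exp_add]
      congr 1
      field_simp
      ring
    rw [h1, h2, h3]
    ring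
  rw [hLHS, ← hHS.tsum_eq]
  rw [tsum_eq_sum (s := Finset.range (M + 1)) (fun k hk => by
    rw [hint k, if_neg (by simp [Finset.mem_range] at hk; omega), mul_zero])]
  rw [mul_left_comm]
  congr 1
  rw [Finset.mul_sum]
  refine Finset.sum_congr rfl fun j hj => ?_
  rw [Finset.mem_range, Nat.lt_succ_iff] at hj
  rw [hint j, if_pos (by omega)]
  have e1 : (-1 : ℂ) ^ (x + (j : ℤ)) = (-1 : ℂ) ^ (X + j) := by
    rw [show x + (j : ℤ) = ((X + j : ℕ) : ℤ) by omega, zpow_natCast]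
  have e2 : (x + (j : ℤ) - 1).toNat = X + j - 1 := by omega
  rw [e1, e2]
  have hfac : ((j.factorial : ℂ)) ≠ 0 := Nat.cast_ne_zero.mpr j.factorial_ne_zero
  field_simp [Real.pi_ne_zero, Complex.I_ne_zero]
end

section
/- Let k ∈ ℕ, let x ∈ ℤ with x ≥ k + 1, let r ∈ ℝ with r > 1, let a ∈ ℂ with |a| < r, and let t ∈ ℂ. Then ∮_{|ζ|=r} (1 − ζ)^{−x} · exp(t·ζ/(1 − ζ)) · ζ^k/(ζ − a) dζ = 0. -/
open Complex Real

/-- Vanishing contour integral (Tracy–Widom, Remark after Theorem 1):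
`∮_{|ζ|=r} (1-ζ)^{-x} e^{tζ/(1-ζ)} ζᵏ/(ζ-a) dζ = 0` when `x ≥ k+1` and `|a| < r`. -/
theorem stmt_8 (k : ℕ) (x : ℤ) (hx : (k : ℤ) + 1 ≤ x) (r : ℝ) (hr : 1 < r)
    (a : ℂ) (ha : ‖a‖ < r) (t : ℂ) :
    (∮ ζ in C(0, r),
        (1 - ζ) ^ (-x) * Complex.exp (t * ζ / (1 - ζ)) * ζ ^ k / (ζ - a)) = 0 := by
  have hr0 : (0:ℝ) < r := lt_trans one_pos hr
  set f : ℂ → ℂ := fun ζ => (1 - ζ) ^ (-x) * Complex.exp (t * ζ / (1 - ζ)) * ζ ^ k / (ζ - a)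
    with hf
  -- differentiability away from 1 and a
  have hdiff : ∀ ζ : ℂ, r ≤ ‖ζ‖ → DifferentiableAt ℂ f ζ := by
    intro ζ hζ
    have h1 : (1 : ℂ) - ζ ≠ 0 := by
      intro h
      have : ζ = 1 := by linear_combination -h
      rw [this] at hζ; simp at hζ; linarith
    have h2 : ζ - a ≠ 0 := by
      intro h
      have : ζ = a := by linear_combination h
      rw [this] at hζ; linarith
    have hd1 : DifferentiableAt ℂ (fun ζ : ℂ => (1:ℂ) - ζ) ζ :=
      (differentiableAt_const 1).sub differentiableAt_id
    exact ((((hd1.zpow (Or.inl h1)).mul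
      ((((differentiableAt_const t).mul differentiableAt_id).div hd1 h1).cexp)).mul
      (differentiableAt_id.pow k)).div (differentiableAt_id.sub_const a) h2)
  -- the circle integral is the same over every radius R ≥ r
  have hconst : ∀ R : ℝ, r ≤ R → (∮ ζ in C(0, R), f ζ) = ∮ ζ in C(0, r), f ζ := by
    intro R hR
    refine circleIntegral_eq_of_differentiable_on_annulus_off_countable hr0 hR
      Set.countable_empty ?_ ?_
    · intro z hz
      have : r ≤ ‖z‖ := by
        simpa [Complex.dist_eq] using (hz.2 : z ∉ Metric.ball 0 r)
      exact (hdiff z this).continuousAt.continuousWithinAt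
    · intro z hz
      have : r ≤ ‖z‖ := by
        have := hz.1.2
        simp only [Metric.mem_closedBall, dist_zero_right] at this
        exact le_of_lt (not_le.mp this)
      exact hdiff z this
  set n : ℕ := x.toNat with hn
  have hxn : (n : ℤ) = x := Int.toNat_of_nonneg (by omega)
  have hkn : k + 1 ≤ n := by omega
  set B : ℝ := 2 ^ (k + 2) * Real.exp (2 * ‖t‖) with hB
  have hBpos : 0 < B := by positivity
  set R0 : ℝ := max (max 2 (2 * ‖a‖)) r with hR0
  -- pointwise bound on circles of radius R ≥ R0
  have hbound : ∀ R : ℝ, R0 ≤ R → ∀ ζ ∈ Metric.sphere (0:ℂ) R, ‖f ζ‖ ≤ B / R ^ 2 := by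
    intro R hRR ζ hζ
    have hR2 : 2 ≤ R := le_trans (le_trans (le_max_left _ _) (le_max_left _ _)) hRR
    have hRa : 2 * ‖a‖ ≤ R :=
      le_trans (le_trans (le_max_right _ _) (le_max_left _ _)) hRR
    have hRpos : 0 < R := by linarith
    have hζR : ‖ζ‖ = R := by simpa [Complex.dist_eq] using hζ
    have h1 : R / 2 ≤ ‖1 - ζ‖ := by
      have h := norm_sub_norm_le ζ 1
      rw [← norm_neg (ζ - 1)] at h
      simp only [neg_sub, hζR,
        norm_one] at h
      linarith
    have h1pos : 0 < ‖1 - ζ‖ := by linarith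
    have h2 : R / 2 ≤ ‖ζ - a‖ := by
      have h := norm_sub_norm_le ζ a
      simp only [hζR] at h
      linarith
    have h2pos : 0 < ‖ζ - a‖ := by linarith
    -- exponential bound
    have hexp : ‖Complex.exp (t * ζ / (1 - ζ))‖ ≤ Real.exp (2 * ‖t‖) := by
      rw [Complex.norm_exp]
      apply Real.exp_le_exp.mpr
      calc (t * ζ / (1 - ζ)).re ≤ ‖t * ζ / (1 - ζ)‖ := Complex.re_le_norm _
        _ = ‖t‖ * R / ‖1 - ζ‖ := by
            rw [norm_div, norm_mul, hζR]
        _ ≤ ‖t‖ * R / (R / 2) := by gcongr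
        _ = 2 * ‖t‖ := by field_simp
    have hzpow : ‖(1 - ζ) ^ (-x)‖ = (‖1 - ζ‖ ^ n)⁻¹ := by
      rw [← hxn, norm_zpow, zpow_neg, zpow_natCast]
    have hone : (1:ℝ) ≤ R / 2 := by linarith
    calc ‖f ζ‖ = (‖1 - ζ‖ ^ n)⁻¹ * ‖Complex.exp (t * ζ / (1 - ζ))‖
            * R ^ k / ‖ζ - a‖ := by
          simp only [hf, norm_div, norm_mul, norm_pow, hζR, hzpow]
      _ ≤ ((R / 2) ^ n)⁻¹ * Real.exp (2 * ‖t‖) * R ^ k / (R / 2) := by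
          gcongr
      _ ≤ ((R / 2) ^ (k + 1))⁻¹ * Real.exp (2 * ‖t‖) * R ^ k / (R / 2) := by
          gcongr
      _ = B / R ^ 2 := by
          rw [hB]
          field_simp
          have h12 : ((1:ℝ)/2)^k * 2^k = 1 := by rw [← mul_pow]; norm_num
          linear_combination (-(R * R ^ k * 2)) * h12
  -- conclude
  have key : ∀ R : ℝ, R0 ≤ R → ‖∮ ζ in C(0, r), f ζ‖ ≤ 2 * π * B / R := by
    intro R hRR
    have hRr : r ≤ R := le_trans (le_max_right _ _) hRR
    have hRpos : (0:ℝ) < R := lt_of_lt_of_le hr0 hRr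
    rw [← hconst R hRr]
    have := circleIntegral.norm_integral_le_of_norm_le_const (f := f) (c := 0) (R := R)
      hRpos.le (C := B / R ^ 2) (hbound R hRR)
    calc ‖∮ ζ in C(0, R), f ζ‖ ≤ 2 * π * R * (B / R ^ 2) := this
      _ = 2 * π * B / R := by field_simp
  have htend : Filter.Tendsto (fun R : ℝ => 2 * π * B / R) Filter.atTop (nhds 0) :=
    tendsto_const_nhds.div_atTop Filter.tendsto_id
  have hle : ‖∮ ζ in C(0, r), f ζ‖ ≤ 0 := by
    refine ge_of_tendsto htend ?_
    filter_upwards [Filter.eventually_ge_atTop R0] with R hR using key R hR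
  have := le_antisymm hle (norm_nonneg _)
  simpa [hf] using norm_eq_zero.mp this
end

section
/- Let τ, r ∈ ℝ with 0 < τ < 1 and 1 < r < τ⁻¹, and let η ∈ ℂ with |η| = r. Then Re(1/(1 − η) − 1/(1 − τ·η)) ≤ 1/(1 + r) − 1/(1 + τ·r), and moreover 1/(1 + r) − 1/(1 + τ·r) < 0. -/
open Complex

/-- Key estimate in the proof of Theorem 1 of Tracy–Widom:
on the circle `|η| = r` with `1 < r < τ⁻¹`,
`Re(1/(1-η) - 1/(1-τη)) ≤ 1/(1+r) - 1/(1+τr) < 0`. -/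
theorem stmt_10 (τ r : ℝ) (hτ : 0 < τ) (hτ' : τ < 1) (hr : 1 < r) (hr' : r < τ⁻¹)
    (η : ℂ) (hη : ‖η‖ = r) :
    (1 / (1 - η) - 1 / (1 - ↑τ * η)).re ≤ 1 / (1 + r) - 1 / (1 + τ * r) ∧
    1 / (1 + r) - 1 / (1 + τ * r) < 0 := by
  have hr0 : (0:ℝ) < r := lt_trans one_pos hr
  have hτr : τ * r < 1 := by
    have := mul_lt_mul_of_pos_left hr' hτ
    rwa [mul_inv_cancel₀ (ne_of_gt hτ)] at this
  set x := η.re with hx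
  set y := η.im with hy
  have hnsq : x ^ 2 + y ^ 2 = r ^ 2 := by
    have h := Complex.sq_norm η
    rw [hη] at h
    rw [h]
    simp [Complex.normSq_apply, hx, hy]; ring
  have habs : |x| ≤ r := by
    have := Complex.abs_re_le_norm η
    rwa [hη] at this
  have hxr : x ≤ r := (abs_le.mp habs).2
  have hxr' : -r ≤ x := (abs_le.mp habs).1
  have d1 : (1 - x) ^ 2 + y ^ 2 = 1 - 2 * x + r ^ 2 := by nlinarith [hnsq]
  have d1pos : (0:ℝ) < 1 - 2 * x + r ^ 2 := by nlinarith [sq_nonneg (r - 1)]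
  have d2 : (1 - τ * x) ^ 2 + (τ * y) ^ 2 = 1 - 2 * (τ * x) + τ ^ 2 * r ^ 2 := by
    nlinarith [hnsq]
  have d2pos : (0:ℝ) < 1 - 2 * (τ * x) + τ ^ 2 * r ^ 2 := by
    nlinarith [sq_nonneg (1 - τ * r), mul_le_mul_of_nonneg_left hxr hτ.le]
  have h1r : (0:ℝ) < 1 + r := by linarith
  have h1τr : (0:ℝ) < 1 + τ * r := by nlinarith
  have hre : (1 / (1 - η) - 1 / (1 - ↑τ * η)).re =
      (1 - x) / (1 - 2 * x + r ^ 2) - (1 - τ * x) / (1 - 2 * (τ * x) + τ ^ 2 * r ^ 2) := by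
    rw [← d1, ← d2]
    simp [Complex.div_re, Complex.normSq_apply, Complex.sub_re, Complex.sub_im,
      Complex.mul_re, Complex.mul_im, ← hx, ← hy]
    ring_nf
  constructor
  · rw [hre]
    have key1 : (1 - x) / (1 - 2 * x + r ^ 2) ≤ 1 / (1 + r) := by
      rw [div_le_div_iff₀ d1pos h1r]
      nlinarith [mul_nonneg (sub_nonneg.mpr hr.le) (by linarith : (0:ℝ) ≤ x + r)]
    have key2 : 1 / (1 + τ * r) ≤ (1 - τ * x) / (1 - 2 * (τ * x) + τ ^ 2 * r ^ 2) := by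
      rw [div_le_div_iff₀ h1τr d2pos]
      have hfac : (1 - τ * x) * (1 + τ * r) - 1 * (1 - 2 * (τ * x) + τ ^ 2 * r ^ 2)
          = τ * (x + r) * (1 - τ * r) := by ring
      have hnn : 0 ≤ τ * (x + r) * (1 - τ * r) :=
        mul_nonneg (mul_nonneg hτ.le (by linarith)) (by linarith)
      linarith
    linarith
  · have : 1 + τ * r < 1 + r := by nlinarith
    have h1 : 1 / (1 + r) < 1 / (1 + τ * r) := by
      exact one_div_lt_one_div_of_lt h1τr this
    linarith
end

section
/- Let τ, r ∈ ℝ with 0 < τ < 1 and 1 < r < τ⁻¹, and let x ∈ ℤ. Set δ = 1/(1 + τ·r) − 1/(1 + r). Then δ > 0, and there exists a constant C > 0 such that for every real t ≥ 0 and every η ∈ ℂ with |η| = r, |((1 − τη)/(1 − η))^x · exp((1/(1 − η) − 1/(1 − τη))·t)| ≤ C·e^{−δ·t}. -/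
open Complex

private lemma stmt_11_key (τ r : ℝ) (hτ : 0 < τ) (hτ' : τ < 1) (hr : 1 < r)
    (hτr : τ * r < 1) (δ : ℝ) (hδdef : δ = 1 / (1 + τ * r) - 1 / (1 + r)) :
    ∀ a b : ℝ, r ^ 2 = a * a + b * b → -r ≤ a → a ≤ r →
      (1 - a) / ((1 - a) * (1 - a) + b * b)
        - (1 - τ * a) / ((1 - τ * a) * (1 - τ * a) + (τ * b) * (τ * b)) ≤ -δ := by
  intro a b hsq ha1 ha2
  have hτr0 : 0 < τ * r := mul_pos hτ (by linarith)
  have hN1 : (0:ℝ) < (1 - a) * (1 - a) + b * b := by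
    nlinarith [mul_pos (show (0:ℝ) < r - 1 by linarith) (show (0:ℝ) < r - 1 by linarith)]
  have hτa : τ * a ≤ τ * r := mul_le_mul_of_nonneg_left ha2 hτ.le
  have hτa' : -(τ * r) ≤ τ * a := by
    have := mul_le_mul_of_nonneg_left ha1 hτ.le
    linarith [this]
  have hN2 : (0:ℝ) < (1 - τ * a) * (1 - τ * a) + (τ * b) * (τ * b) := by
    nlinarith [mul_pos (show (0:ℝ) < 1 - τ * a by linarith)
      (show (0:ℝ) < 1 - τ * a by linarith), sq_nonneg (τ * b)]
  have h1 : (1 - a) / ((1 - a) * (1 - a) + b * b) ≤ 1 / (1 + r) := by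
    rw [div_le_div_iff₀ hN1 (by linarith)]
    nlinarith [mul_nonneg (sub_nonneg.2 hr.le) (by linarith : (0:ℝ) ≤ r + a)]
  have h2 : 1 / (1 + τ * r) ≤ (1 - τ * a) / ((1 - τ * a) * (1 - τ * a) + (τ * b) * (τ * b)) := by
    rw [div_le_div_iff₀ (by linarith) hN2]
    have hb2 : (τ * b) * (τ * b) = (τ * r) * (τ * r) - (τ * a) * (τ * a) := by
      linear_combination (-(τ * τ)) * hsq
    nlinarith [hb2, mul_nonneg (by linarith : (0:ℝ) ≤ 1 - τ * r)
      (by linarith : (0:ℝ) ≤ τ * a + τ * r)]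
  rw [hδdef]
  linarith

/-- Uniform estimate `φ(η) = O(e^{-δt})` on the circle `|η| = r`
(Tracy–Widom, proof of Theorem 1). -/
theorem stmt_11 (τ r : ℝ) (hτ : 0 < τ) (hτ' : τ < 1) (hr : 1 < r) (hr' : r < τ⁻¹)
    (x : ℤ) (δ : ℝ) (hδdef : δ = 1 / (1 + τ * r) - 1 / (1 + r)) :
    0 < δ ∧
    ∃ C : ℝ, 0 < C ∧ ∀ t : ℝ, 0 ≤ t → ∀ η : ℂ, ‖η‖ = r →
      ‖((1 - ↑τ * η) / (1 - η)) ^ x *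
          Complex.exp ((1 / (1 - η) - 1 / (1 - ↑τ * η)) * (t : ℂ))‖ ≤
        C * Real.exp (-δ * t) := by
  have hr0 : (0:ℝ) < r := lt_trans one_pos hr
  have hτr : τ * r < 1 := by
    have h := mul_lt_mul_of_pos_left hr' hτ
    rwa [mul_inv_cancel₀ hτ.ne'] at h
  have hτr0 : 0 < τ * r := mul_pos hτ hr0
  have hδ : 0 < δ := by
    rw [hδdef]
    have : 1 / (1 + r) < 1 / (1 + τ * r) :=
      one_div_lt_one_div_of_lt (by linarith) (by nlinarith)
    linarith
  refine ⟨hδ, ?_⟩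
  obtain ⟨m, hmdef⟩ : ∃ m : ℝ, m = (1 - τ * r) / (1 + r) := ⟨_, rfl⟩
  obtain ⟨M, hMdef⟩ : ∃ M : ℝ, M = (1 + τ * r) / (r - 1) := ⟨_, rfl⟩
  have hm0 : 0 < m := hmdef ▸ div_pos (by linarith) (by linarith)
  have hM0 : 0 < M := hMdef ▸ div_pos (by linarith) (by linarith)
  refine ⟨M ^ x + m ^ x, by positivity, ?_⟩
  intro t ht η hη
  have hsq := Complex.sq_norm η
  rw [hη, Complex.normSq_apply] at hsq
  have har : -r ≤ η.re := by nlinarith [sq_nonneg η.im, sq_nonneg (η.re + r)]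
  have har' : η.re ≤ r := by nlinarith [sq_nonneg η.im, sq_nonneg (η.re - r)]
  -- bounds on |1 - η| and |1 - τη|
  have h1η_lb : r - 1 ≤ ‖1 - η‖ := by
    have h := norm_sub_norm_le η 1
    rw [hη, norm_sub_rev] at h
    simpa using h
  have h1η_ub : ‖1 - η‖ ≤ 1 + r := by
    have h := norm_sub_le (1:ℂ) η
    simpa [hη] using h
  have hτη : ‖(τ:ℂ) * η‖ = τ * r := by
    rw [norm_mul, hη]
    simp [abs_of_pos hτ]
  have h2η_lb : 1 - τ * r ≤ ‖1 - (τ:ℂ) * η‖ := by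
    have h := norm_sub_norm_le (1:ℂ) ((τ:ℂ) * η)
    rw [hτη] at h
    simpa using h
  have h2η_ub : ‖1 - (τ:ℂ) * η‖ ≤ 1 + τ * r := by
    have h := norm_sub_le (1:ℂ) ((τ:ℂ) * η)
    rw [hτη] at h
    simpa using h
  have h1η_pos : 0 < ‖1 - η‖ := lt_of_lt_of_le (by linarith) h1η_lb
  -- ratio bounds
  have hρ_ub : ‖(1 - (τ:ℂ) * η) / (1 - η)‖ ≤ M := by
    rw [norm_div, hMdef]
    gcongr
  have hρ_lb : m ≤ ‖(1 - (τ:ℂ) * η) / (1 - η)‖ := by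
    rw [norm_div, hmdef]
    gcongr
  have hρ0 : 0 < ‖(1 - (τ:ℂ) * η) / (1 - η)‖ := lt_of_lt_of_le hm0 hρ_lb
  -- zpow bound
  have hpow : ‖((1 - (τ:ℂ) * η) / (1 - η)) ^ x‖ ≤ M ^ x + m ^ x := by
    rw [norm_zpow]
    set ρ := ‖(1 - (τ:ℂ) * η) / (1 - η)‖
    rcases x with n | n
    · show ρ ^ (n:ℤ) ≤ M ^ (n:ℤ) + m ^ (n:ℤ)
      have h1 : ρ ^ (n:ℤ) ≤ M ^ (n:ℤ) := by
        rw [zpow_natCast, zpow_natCast]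
        exact pow_le_pow_left₀ hρ0.le hρ_ub n
      have h2 : (0:ℝ) < m ^ (n:ℤ) := zpow_pos hm0 _
      linarith
    · have h1 : ρ ^ (Int.negSucc n) ≤ m ^ (Int.negSucc n) := by
        rw [zpow_negSucc, zpow_negSucc]
        exact inv_anti₀ (pow_pos hm0 _) (pow_le_pow_left₀ hm0.le hρ_lb _)
      have h2 : (0:ℝ) < M ^ (Int.negSucc n) := zpow_pos hM0 _
      linarith
  -- real part bound
  have hre : ((1 / (1 - η) - 1 / (1 - (τ:ℂ) * η))).re ≤ -δ := by
    have e1 : ((1:ℂ) - η).re = 1 - η.re := by simp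
    have e1' : ((1:ℂ) - η).im = -η.im := by simp
    have e2 : ((1:ℂ) - (τ:ℂ) * η).re = 1 - τ * η.re := by simp
    have e2' : ((1:ℂ) - (τ:ℂ) * η).im = -(τ * η.im) := by simp
    have heq : ((1 / (1 - η) - 1 / (1 - (τ:ℂ) * η))).re
        = (1 - η.re) / ((1 - η.re) * (1 - η.re) + η.im * η.im)
          - (1 - τ * η.re) / ((1 - τ * η.re) * (1 - τ * η.re) + (τ * η.im) * (τ * η.im)) := by
      rw [Complex.sub_re, one_div, one_div, Complex.inv_re, Complex.inv_re,
        Complex.normSq_apply, Complex.normSq_apply, e1, e1', e2, e2']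
      ring_nf
    rw [heq]
    exact stmt_11_key τ r hτ hτ' hr hτr δ hδdef η.re η.im hsq har har'
  -- exponential bound
  have hexp : ‖Complex.exp ((1 / (1 - η) - 1 / (1 - (τ:ℂ) * η)) * (t:ℂ))‖
      ≤ Real.exp (-δ * t) := by
    rw [Complex.norm_exp]
    apply Real.exp_le_exp.2
    have : ((1 / (1 - η) - 1 / (1 - (τ:ℂ) * η)) * (t:ℂ)).re
        = (1 / (1 - η) - 1 / (1 - (τ:ℂ) * η)).re * t := by
      simp [Complex.mul_re]
    rw [this]
    exact mul_le_mul_of_nonneg_right hre ht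
  calc ‖((1 - (τ:ℂ) * η) / (1 - η)) ^ x *
          Complex.exp ((1 / (1 - η) - 1 / (1 - (τ:ℂ) * η)) * (t:ℂ))‖
      = ‖((1 - (τ:ℂ) * η) / (1 - η)) ^ x‖ *
          ‖Complex.exp ((1 / (1 - η) - 1 / (1 - (τ:ℂ) * η)) * (t:ℂ))‖ := norm_mul _ _
    _ ≤ (M ^ x + m ^ x) * Real.exp (-δ * t) := by
        apply mul_le_mul hpow hexp (norm_nonneg _)
        positivity
end

section
/- Let τ ∈ ℝ with 0 < τ < 1 and let μ ∈ ℂ with μ ≠ 0 and τ^k·μ ≠ 1 for every k ∈ ℤ. Then for every z ∈ ℂ with 1 < |z| < τ⁻¹, the doubly infinite series f(μ, z) = ∑_{k∈ℤ} τ^k·z^k/(1 − τ^k·μ) converges absolutely; moreover the function z ↦ f(μ, z) is complex-differentiable on the open annulus {z : 1 < |z| < τ⁻¹}. -/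
open Complex

private lemma aux_lb {g : ℕ → ℂ} (h0 : ∀ n, g n ≠ 0) {L : ℂ} (hL : L ≠ 0)
    (h : Filter.Tendsto g Filter.atTop (nhds L)) :
    ∃ d > 0, ∀ n, d ≤ ‖g n‖ := by
  have habs : Filter.Tendsto (fun n => ‖g n‖) Filter.atTop
      (nhds ‖L‖) := (continuous_norm.tendsto L).comp h
  have hLpos : 0 < ‖L‖ := norm_pos_iff.mpr hL
  obtain ⟨N, hN⟩ := Filter.eventually_atTop.mp
    (habs.eventually (eventually_ge_nhds (by linarith : ‖L‖ / 2 < ‖L‖)))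
  have hne : (Finset.range (N + 1)).Nonempty := ⟨0, by simp⟩
  set m := (Finset.range (N + 1)).inf' hne (fun n => ‖g n‖) with hm
  refine ⟨min (‖L‖ / 2) m, lt_min (by linarith) ?_, ?_⟩
  · exact (Finset.lt_inf'_iff _).mpr fun n _ => norm_pos_iff.mpr (h0 n)
  · intro n
    rcases le_or_gt N n with hn | hn
    · exact le_trans (min_le_left _ _) (hN n hn)
    · exact le_trans (min_le_right _ _)
        (Finset.inf'_le _ (Finset.mem_range.mpr (by omega)))

/-- Absolute convergence and analyticity of
`f(μ,z) = ∑_{k∈ℤ} τᵏ zᵏ/(1 - τᵏ μ)` on the annulus `1 < |z| < τ⁻¹`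
(Tracy–Widom, Section V). -/
theorem stmt_12 (τ : ℝ) (hτ : 0 < τ) (hτ' : τ < 1) (μ : ℂ) (hμ : μ ≠ 0)
    (hμ' : ∀ k : ℤ, (↑τ : ℂ) ^ k * μ ≠ 1) :
    (∀ z : ℂ, 1 < ‖z‖ → ‖z‖ < τ⁻¹ →
      Summable (fun k : ℤ =>
        ‖(↑τ : ℂ) ^ k * z ^ k / (1 - (↑τ : ℂ) ^ k * μ)‖)) ∧
    DifferentiableOn ℂ
      (fun z : ℂ => ∑' k : ℤ, (↑τ : ℂ) ^ k * z ^ k / (1 - (↑τ : ℂ) ^ k * μ))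
      {z : ℂ | 1 < ‖z‖ ∧ ‖z‖ < τ⁻¹} := by
  have hτ0 : (↑τ : ℂ) ≠ 0 := by
    exact_mod_cast hτ.ne'
  have hτnorm : ‖(↑τ : ℂ)‖ < 1 := by
    simpa [abs_of_pos hτ] using hτ'
  -- lower bound for denominators with k = n ≥ 0
  obtain ⟨d₁, hd₁pos, hd₁⟩ : ∃ d > 0, ∀ n : ℕ, d ≤ ‖1 - (↑τ : ℂ) ^ n * μ‖ := by
    apply aux_lb (L := 1)
    · intro n
      have := hμ' (n : ℤ)
      rw [zpow_natCast] at this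
      intro hcon
      exact this (by linear_combination -hcon)
    · exact one_ne_zero
    · have : Filter.Tendsto (fun n : ℕ => (↑τ : ℂ) ^ n * μ) Filter.atTop (nhds 0) := by
        simpa using (tendsto_pow_atTop_nhds_zero_of_norm_lt_one hτnorm).mul_const μ
      simpa using tendsto_const_nhds.sub this
  -- lower bound for denominators with k = -(n) < 0 (rewritten form)
  obtain ⟨d₂, hd₂pos, hd₂⟩ : ∃ d > 0, ∀ n : ℕ, d ≤ ‖(↑τ : ℂ) ^ n - μ‖ := by
    apply aux_lb (L := -μ)
    · intro n
      have := hμ' (-(n : ℤ))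
      intro hcon
      apply this
      have hmu : μ = (↑τ : ℂ) ^ n := by linear_combination -hcon
      rw [hmu, ← zpow_natCast (↑τ : ℂ) n, ← zpow_add₀ hτ0]
      simp
    · simpa using hμ
    · have : Filter.Tendsto (fun n : ℕ => (↑τ : ℂ) ^ n - μ) Filter.atTop (nhds (0 - μ)) :=
        (tendsto_pow_atTop_nhds_zero_of_norm_lt_one hτnorm).sub_const μ
      simpa using this
  -- key rewriting of the terms with negative index
  have hterm_neg : ∀ (m : ℕ) (z : ℂ),
      (↑τ : ℂ) ^ (-(m : ℤ)) * z ^ (-(m : ℤ)) / (1 - (↑τ : ℂ) ^ (-(m : ℤ)) * μ)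
        = z ^ (-(m : ℤ)) / ((↑τ : ℂ) ^ m - μ) := by
    intro m z
    have h1 : (1 : ℂ) - (↑τ : ℂ) ^ (-(m : ℤ)) * μ
        = (↑τ : ℂ) ^ (-(m : ℤ)) * ((↑τ : ℂ) ^ m - μ) := by
      rw [mul_sub, ← zpow_natCast (↑τ : ℂ) m, ← zpow_add₀ hτ0]
      simp
    rw [h1, mul_comm ((↑τ : ℂ) ^ (-(m : ℤ))) (z ^ (-(m : ℤ))),
      mul_comm ((↑τ : ℂ) ^ (-(m : ℤ))) ((↑τ : ℂ) ^ m - μ),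
      mul_div_mul_right _ _ (zpow_ne_zero _ hτ0)]
  -- the master bound
  have key : ∀ a b : ℝ, 1 < a → 0 < b → b < τ⁻¹ →
      ∃ u : ℤ → ℝ, Summable u ∧ ∀ (k : ℤ) (z : ℂ), a ≤ ‖z‖ → ‖z‖ ≤ b →
        ‖(↑τ : ℂ) ^ k * z ^ k / (1 - (↑τ : ℂ) ^ k * μ)‖ ≤ u k := by
    intro a b ha hb0 hb
    have hp0 : 0 ≤ τ * b := by positivity
    have hp1 : τ * b < 1 := by
      calc τ * b < τ * τ⁻¹ := by exact mul_lt_mul_of_pos_left hb hτ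
      _ = 1 := mul_inv_cancel₀ hτ.ne'
    have hq0 : (0 : ℝ) ≤ a⁻¹ := by positivity
    have hq1 : a⁻¹ < 1 := by
      rw [inv_lt_one_iff₀]; right; exact ha
    refine ⟨fun k => match k with
      | Int.ofNat n => (τ * b) ^ n / d₁
      | Int.negSucc n => (a⁻¹) ^ (n + 1) / d₂, ?_, ?_⟩
    · apply Summable.of_nat_of_neg_add_one
      · exact (summable_geometric_of_lt_one hp0 hp1).div_const d₁
      · have : Summable (fun n : ℕ => (a⁻¹) ^ (n + 1) / d₂) := by
          apply Summable.congr (((summable_geometric_of_lt_one hq0 hq1).div_const d₂).mul_left a⁻¹)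
          intro n
          rw [pow_succ]
          ring
        apply this.congr
        intro n
        rw [show (-((n : ℤ) + 1)) = Int.negSucc n from (Int.negSucc_eq n).symm]
      -- then show u(-(n+1)) matches
    · intro k z haz hzb
      have hz0 : (0:ℝ) < ‖z‖ := lt_of_lt_of_le (by linarith) haz
      cases k with
      | ofNat n =>
        show ‖_‖ ≤ (τ * b) ^ n / d₁
        rw [Int.ofNat_eq_coe, zpow_natCast, zpow_natCast, norm_div, norm_mul, norm_pow, norm_pow,
          Complex.norm_real, Real.norm_eq_abs, abs_of_pos hτ]
        apply div_le_div₀ (by positivity) ?_ hd₁pos ?_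
        · rw [mul_pow]
          apply mul_le_mul_of_nonneg_left _ (by positivity)
          exact pow_le_pow_left₀ (norm_nonneg z) hzb n
        · exact hd₁ n
      | negSucc n =>
        show ‖_‖ ≤ (a⁻¹) ^ (n + 1) / d₂
        rw [Int.negSucc_eq, ← Nat.cast_add_one, hterm_neg (n+1) z, norm_div, norm_zpow,
          zpow_neg, zpow_natCast, ← inv_pow]
        apply div_le_div₀ (by positivity) ?_ hd₂pos (hd₂ (n+1))
        apply pow_le_pow_left₀ (by positivity)
        exact inv_anti₀ (by linarith) haz
  constructor
  · intro z hz1 hz2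
    obtain ⟨u, hu, hb⟩ := key ‖z‖ ‖z‖ hz1 (by linarith) hz2
    exact Summable.of_nonneg_of_le (fun k => norm_nonneg _)
      (fun k => hb k z le_rfl le_rfl) hu
  · intro z₀ hz₀
    obtain ⟨hz₀1, hz₀2⟩ := hz₀
    set a := (1 + ‖z₀‖) / 2 with hadef
    set b := (‖z₀‖ + τ⁻¹) / 2 with hbdef
    have ha1 : 1 < a := by rw [hadef]; linarith
    have hb0 : 0 < b := by rw [hbdef]; have := inv_pos.mpr hτ; linarith
    have hbτ : b < τ⁻¹ := by rw [hbdef]; linarith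
    obtain ⟨u, hu, hbound⟩ := key a b ha1 hb0 hbτ
    set U : Set ℂ := {z : ℂ | a < ‖z‖ ∧ ‖z‖ < b} with hU
    have hUopen : IsOpen U :=
      (isOpen_lt continuous_const continuous_norm).inter
        (isOpen_lt continuous_norm continuous_const)
    have hz₀U : z₀ ∈ U := by
      constructor
      · rw [hadef]; linarith
      · rw [hbdef]; linarith
    have hdiff : ∀ k : ℤ, DifferentiableOn ℂ
        (fun z : ℂ => (↑τ : ℂ) ^ k * z ^ k / (1 - (↑τ : ℂ) ^ k * μ)) U := by
      intro k
      intro z hz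
      have hz0 : z ≠ 0 := by
        intro h
        rw [h] at hz
        simp only [hU, Set.mem_setOf_eq, norm_zero] at hz
        linarith [hz.1]
      exact (((differentiableAt_zpow.mpr (Or.inl hz0)).const_mul _).div_const
        _).differentiableWithinAt
    have hD : DifferentiableOn ℂ
        (fun z : ℂ => ∑' k : ℤ, (↑τ : ℂ) ^ k * z ^ k / (1 - (↑τ : ℂ) ^ k * μ)) U := by
      apply differentiableOn_tsum_of_summable_norm hu hdiff hUopen
      intro k w hw
      simpa using hbound k w hw.1.le hw.2.le
    exact (hD.differentiableAt (hUopen.mem_nhds hz₀U)).differentiableWithinAt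
end

section
/- Let τ ∈ ℝ with 0 < τ < 1, let μ ∈ ℂ with μ ≠ 0 and τ^k·μ ≠ 1 for every k ∈ ℤ, and let ρ ∈ ℝ with 1 < ρ < τ⁻¹. Then there exists a constant C > 0 such that for every z ∈ ℂ with 1 < |z| ≤ ρ, |f(μ, z) − μ⁻¹/(1 − z)| ≤ C, where f(μ, z) = ∑_{k∈ℤ} τ^k·z^k/(1 − τ^k·μ). -/
open Complex

/-- abs of real-to-complex zpow. -/
lemma abs_ofReal_zpow (τ : ℝ) (hτ : 0 < τ) (k : ℤ) :
    ‖(↑τ : ℂ) ^ k‖ = τ ^ k := by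
  rw [norm_zpow, Complex.norm_real, Real.norm_of_nonneg hτ.le]

/-- `f(μ,z) = μ⁻¹/(1-z) + O(1)` for `1 < |z| ≤ ρ`
(Tracy–Widom, proof of Theorem 3). -/
theorem stmt_13 (τ : ℝ) (hτ : 0 < τ) (hτ' : τ < 1) (μ : ℂ) (hμ : μ ≠ 0)
    (hμ' : ∀ k : ℤ, (↑τ : ℂ) ^ k * μ ≠ 1) (ρ : ℝ) (hρ : 1 < ρ) (hρ' : ρ < τ⁻¹) :
    ∃ C : ℝ, 0 < C ∧ ∀ z : ℂ, 1 < ‖z‖ → ‖z‖ ≤ ρ →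
      ‖(∑' k : ℤ, (↑τ : ℂ) ^ k * z ^ k / (1 - (↑τ : ℂ) ^ k * μ)) -
          μ⁻¹ / (1 - z)‖ ≤ C := by
  have hτ0 : (τ:ℝ) ≠ 0 := ne_of_gt hτ
  set m := ‖μ‖ with hm
  have hm0 : 0 < m := norm_pos_iff.mpr hμ
  have hτρ : τ * ρ < 1 := by
    have h := (mul_lt_mul_of_pos_left hρ' hτ)
    rwa [mul_inv_cancel₀ hτ0] at h
  have hτρ0 : 0 < τ * ρ := by positivity
  -- choose N with τ^N small
  have hε : (0:ℝ) < min ((2*m)⁻¹) (m/2) := by positivity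
  obtain ⟨N, hN⟩ := exists_pow_lt_of_lt_one hε hτ'
  have hN1 : τ ^ N * m < 1/2 := by
    have h1 : τ ^ N < (2*m)⁻¹ := lt_of_lt_of_le hN (min_le_left _ _)
    calc τ ^ N * m < (2*m)⁻¹ * m := by exact mul_lt_mul_of_pos_right h1 hm0
    _ = 1/2 := by field_simp
  have hN2 : τ ^ N < m/2 := lt_of_lt_of_le hN (min_le_right _ _)
  -- nonvanishing denominators
  have hne : ∀ k : ℤ, (1 : ℂ) - (↑τ : ℂ) ^ k * μ ≠ 0 := by
    intro k h
    exact hμ' k (by linear_combination -h)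
  -- uniform lower bound δ on denominators
  have hSne : (Finset.Icc (-(N:ℤ)) (N:ℤ)).Nonempty := ⟨0, by simp⟩
  set δ₀ := (Finset.Icc (-(N:ℤ)) (N:ℤ)).inf' hSne
      (fun k => ‖1 - (↑τ : ℂ) ^ k * μ‖) with hδ₀def
  have hδ₀ : 0 < δ₀ := by
    rw [hδ₀def, Finset.lt_inf'_iff]
    exact fun k _ => norm_pos_iff.mpr (hne k)
  set δ := min (1/2 : ℝ) δ₀ with hδdef
  have hδ : 0 < δ := lt_min (by norm_num) hδ₀
  -- monotone facts about real zpow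
  have hzpow_mono : ∀ k l : ℤ, k ≤ l → τ ^ l ≤ τ ^ k :=
    fun k l h => zpow_le_zpow_right_of_le_one₀ hτ (le_of_lt hτ') h
  have hδle : ∀ k : ℤ, δ ≤ ‖1 - (↑τ : ℂ) ^ k * μ‖ := by
    intro k
    by_cases hk : k ∈ Finset.Icc (-(N:ℤ)) (N:ℤ)
    · exact le_trans (min_le_right _ _) (Finset.inf'_le _ hk)
    · have hk' : (N:ℤ) < k ∨ k < -(N:ℤ) := by
        rcases lt_or_ge (N:ℤ) k with h | h
        · exact Or.inl h
        · refine Or.inr ?_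
          by_contra h'
          exact hk (Finset.mem_Icc.mpr ⟨le_of_not_gt h', h⟩)
      have habs : ‖(↑τ:ℂ) ^ k * μ‖ = τ ^ k * m := by
        rw [norm_mul, abs_ofReal_zpow τ hτ]
      refine le_trans (min_le_left _ _) ?_
      rcases hk' with h | h
      · -- k large positive : |τ^k μ| ≤ τ^N m < 1/2
        have h1 : τ ^ k * m ≤ τ ^ N * m := by
          have := hzpow_mono (N:ℤ) k (le_of_lt h)
          have h2 : τ ^ (N:ℤ) = τ ^ N := zpow_natCast τ N
          nlinarith [hm0]
        have h3 : ‖(↑τ:ℂ) ^ k * μ‖ < 1/2 := by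
          rw [habs]; linarith
        have h4 := norm_sub_norm_le (1:ℂ) ((↑τ:ℂ) ^ k * μ)
        simp only [norm_one] at h4
        linarith
      · -- k large negative : |τ^k μ| ≥ 2
        have h1 : τ ^ ((-k):ℤ) ≤ τ ^ N := by
          have h2 : (N:ℤ) ≤ -k := by omega
          have := hzpow_mono (N:ℤ) (-k) h2
          rwa [zpow_natCast] at this
        have h1' : 0 < τ ^ ((-k):ℤ) := zpow_pos hτ _
        have h5 : τ ^ k = (τ ^ ((-k):ℤ))⁻¹ := by
          rw [← zpow_neg, neg_neg]
        have h6 : (2:ℝ) ≤ τ ^ k * m := by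
          rw [h5, inv_mul_eq_div, le_div_iff₀ h1']
          have : τ ^ ((-k):ℤ) < m/2 := lt_of_le_of_lt h1 hN2
          nlinarith
        have h4 := norm_sub_norm_le ((↑τ:ℂ) ^ k * μ) (1:ℂ)
        simp only [norm_one] at h4
        rw [norm_sub_rev] at h4
        rw [habs] at h4
        linarith
  -- stronger bound for very negative k
  have hδneg : ∀ k : ℤ, k < -(N:ℤ) → τ ^ k * m / 2 ≤ ‖1 - (↑τ:ℂ) ^ k * μ‖ := by
    intro k h
    have h1 : τ ^ ((-k):ℤ) ≤ τ ^ N := by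
      have h2 : (N:ℤ) ≤ -k := by omega
      have := hzpow_mono (N:ℤ) (-k) h2
      rwa [zpow_natCast] at this
    have h1' : 0 < τ ^ ((-k):ℤ) := zpow_pos hτ _
    have h5 : τ ^ k = (τ ^ ((-k):ℤ))⁻¹ := by rw [← zpow_neg, neg_neg]
    have h6 : (2:ℝ) ≤ τ ^ k * m := by
      rw [h5, inv_mul_eq_div, le_div_iff₀ h1']
      have : τ ^ ((-k):ℤ) < m/2 := lt_of_le_of_lt h1 hN2
      nlinarith
    have h4 := norm_sub_norm_le ((↑τ:ℂ) ^ k * μ) (1:ℂ)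
    simp only [norm_one] at h4
    rw [norm_sub_rev, norm_mul, abs_ofReal_zpow τ hτ] at h4
    linarith
  -- constants
  have hτN : 0 < τ ^ N := pow_pos hτ N
  set M : ℝ := max (1/(m*δ*τ^N)) (2/m^2) with hMdef
  have hM : 0 < M := lt_of_lt_of_le (by positivity : (0:ℝ) < 1/(m*δ*τ^N)) (le_max_left _ _)
  set CA : ℝ := (1/δ) * (1 - τ*ρ)⁻¹ with hCAdef
  set CB : ℝ := M * (1 - τ)⁻¹ with hCBdef
  have hCA : 0 < CA := by
    rw [hCAdef]
    have : (0:ℝ) < 1 - τ*ρ := by linarith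
    positivity
  have hCB : 0 < CB := by
    rw [hCBdef]
    have : (0:ℝ) < 1 - τ := by linarith
    positivity
  have hM1 : 1/(m*δ*τ^N) ≤ M := le_max_left _ _
  have hM2 : 2/m^2 ≤ M := le_max_right _ _
  have hCAeq : CA = (1/δ) * (1 - τ*ρ)⁻¹ := hCAdef
  have hCBeq : CB = M * (1 - τ)⁻¹ := hCBdef
  clear_value δ₀ δ M CA CB
  refine ⟨CA + CB, by positivity, ?_⟩
  intro z hz1 hz2
  have hz0 : z ≠ 0 := by
    intro h; rw [h] at hz1; simp at hz1; linarith
  have hz1' : z ≠ 1 := by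
    intro h; rw [h] at hz1; simp at hz1
  have hzsub : (1:ℂ) - z ≠ 0 := by
    intro h
    exact hz1' (by linear_combination -h)
  have hzinv : ‖z⁻¹‖ < 1 := by
    rw [norm_inv]
    rw [inv_lt_one_iff₀]
    right; exact hz1
  have hzinv1 : (1:ℂ) - z⁻¹ ≠ 0 := by
    intro h
    have : z⁻¹ = 1 := by linear_combination -h
    rw [inv_eq_one_div] at this
    field_simp at this
    exact hz1' this.symm
  set g : ℤ → ℂ := fun k => (↑τ : ℂ) ^ k * z ^ k / (1 - (↑τ : ℂ) ^ k * μ) with hgdef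
  -- bound on nonneg part
  have hgabs : ∀ k : ℤ, ‖g k‖ =
      τ ^ k * ‖z‖ ^ k / ‖1 - (↑τ:ℂ) ^ k * μ‖ := by
    intro k
    rw [hgdef]
    simp only [norm_div, norm_mul, abs_ofReal_zpow τ hτ, norm_zpow]
  have hA_bound : ∀ n : ℕ, ‖g n‖ ≤ (1/δ) * (τ*ρ)^n := by
    intro n
    rw [hgabs]
    have h1 : τ ^ (n:ℤ) = τ ^ n := zpow_natCast τ n
    have h2 : ‖z‖ ^ (n:ℤ) = ‖z‖ ^ n := zpow_natCast _ n
    rw [h1, h2]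
    have h3 : ‖z‖ ^ n ≤ ρ ^ n := pow_le_pow_left₀ (by positivity) hz2 n
    have h4 := hδle (n:ℤ)
    have h5 : 0 < ‖1 - (↑τ:ℂ) ^ (n:ℤ) * μ‖ :=
      norm_pos_iff.mpr (hne _)
    rw [div_le_iff₀ h5]
    have h6 : τ ^ n * ‖z‖ ^ n ≤ τ ^ n * ρ ^ n := by
      apply mul_le_mul_of_nonneg_left h3 (by positivity)
    calc τ ^ n * ‖z‖ ^ n ≤ τ ^ n * ρ ^ n := h6
    _ = (τ*ρ)^n * 1 := by rw [mul_pow]; ring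
    _ ≤ (τ*ρ)^n * ((1/δ) * ‖1 - (↑τ:ℂ) ^ (n:ℤ) * μ‖) := by
        apply mul_le_mul_of_nonneg_left _ (by positivity)
        rw [one_div, inv_mul_eq_div, le_div_iff₀ hδ, one_mul]
        exact hδle _
    _ = 1/δ * (τ*ρ)^n * ‖1 - (↑τ:ℂ) ^ (n:ℤ) * μ‖ := by ring
  have hgeo : Summable (fun n : ℕ => (1/δ) * (τ*ρ)^n) :=
    (summable_geometric_of_lt_one (le_of_lt hτρ0) hτρ).mul_left _
  have hAsum : Summable (fun n : ℕ => g n) :=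
    Summable.of_norm_bounded hgeo hA_bound
  have hAbnd : ‖∑' n : ℕ, g n‖ ≤ CA := by
    calc ‖∑' n : ℕ, g n‖ ≤ ∑' n : ℕ, ‖g n‖ :=
          norm_tsum_le_tsum_norm
            (Summable.of_nonneg_of_le (fun n => norm_nonneg _) hA_bound hgeo)
    _ ≤ ∑' n : ℕ, (1/δ) * (τ*ρ)^n := by
        apply Summable.tsum_le_tsum hA_bound _ hgeo
        exact Summable.of_nonneg_of_le (fun n => norm_nonneg _) hA_bound hgeo
    _ = (1/δ) * (1 - τ*ρ)⁻¹ := by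
        rw [tsum_mul_left, tsum_geometric_of_lt_one (le_of_lt hτρ0) hτρ]
    _ = CA := hCAeq.symm
  -- negative part
  set b : ℕ → ℂ := fun n => z ^ (-(n+1) : ℤ) / (μ * (1 - (↑τ:ℂ) ^ (-(n+1):ℤ) * μ)) with hbdef
  have hsplit : ∀ n : ℕ, g (-(n+1)) = -μ⁻¹ * z ^ (-(n+1):ℤ) + b n := by
    intro n
    have h1 := hne (-(n+1) : ℤ)
    show (↑τ:ℂ) ^ (-(n+1):ℤ) * z ^ (-(n+1):ℤ) / (1 - (↑τ:ℂ) ^ (-(n+1):ℤ) * μ)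
        = -μ⁻¹ * z ^ (-(n+1):ℤ) + z ^ (-(n+1):ℤ) / (μ * (1 - (↑τ:ℂ) ^ (-(n+1):ℤ) * μ))
    generalize hw : (↑τ:ℂ) ^ (-(n+1):ℤ) = w at h1 ⊢
    generalize z ^ (-(n+1):ℤ) = u
    field_simp
    ring
  have hb_bound : ∀ n : ℕ, ‖b n‖ ≤ M * τ ^ n := by
    intro n
    have hzk : ‖z ^ (-(n+1):ℤ)‖ ≤ 1 := by
      rw [norm_zpow]
      apply zpow_le_one_of_nonpos₀ (le_of_lt hz1)
      omega
    have hden : 0 < ‖1 - (↑τ:ℂ) ^ (-(n+1):ℤ) * μ‖ :=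
      norm_pos_iff.mpr (hne _)
    rw [hbdef]
    simp only [norm_div, norm_mul]
    rw [div_le_iff₀ (by positivity)]
    by_cases hn : (n+1:ℤ) ≤ (N:ℤ)
    · -- use δ bound
      have h1 := hδle (-(n+1):ℤ)
      have hτn : τ ^ N ≤ τ ^ n := by
        apply pow_le_pow_of_le_one (le_of_lt hτ) (le_of_lt hτ')
        omega
      calc ‖z ^ (-(n+1):ℤ)‖ ≤ 1 := hzk
      _ = (1/(m*δ*τ^N)) * τ^N * (m * δ) := by field_simp
      _ ≤ M * τ^n * (m * δ) := by
          apply mul_le_mul_of_nonneg_right _ (by positivity)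
          calc (1/(m*δ*τ^N)) * τ^N ≤ M * τ^N := by
                apply mul_le_mul_of_nonneg_right hM1 (by positivity)
          _ ≤ M * τ^n := mul_le_mul_of_nonneg_left hτn (le_of_lt hM)
      _ ≤ M * τ^n * (m * ‖1 - (↑τ:ℂ) ^ (-(n+1):ℤ) * μ‖) := by
          apply mul_le_mul_of_nonneg_left _ (by positivity)
          exact mul_le_mul_of_nonneg_left h1 (le_of_lt hm0)
      _ = M * τ^n * (‖μ‖ * ‖1 - (↑τ:ℂ) ^ (-(n+1):ℤ) * μ‖) := by rw [hm]
    · -- use growth bound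
      have hklt : (-(n+1):ℤ) < -(N:ℤ) := by omega
      have h1 := hδneg _ hklt
      have hτk : τ ^ (-(n+1):ℤ) = (τ ^ (n+1))⁻¹ := by
        rw [zpow_neg, ← zpow_natCast τ (n+1)]
        norm_cast
      rw [hτk] at h1
      have hτn1 : 0 < τ ^ (n+1) := pow_pos hτ _
      have hinv : (1:ℝ) ≤ 1/τ := one_le_one_div hτ (le_of_lt hτ')
      calc ‖z ^ (-(n+1):ℤ)‖ ≤ 1 := hzk
      _ ≤ τ^n / τ^(n+1) := by
          rw [pow_succ, ← div_div, div_self (ne_of_gt (pow_pos hτ n))]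
          exact hinv
      _ = (2/m^2) * τ^n * (m * ((τ^(n+1))⁻¹ * m / 2)) := by
          field_simp
      _ ≤ M * τ^n * (m * ‖1 - (↑τ:ℂ) ^ (-(n+1):ℤ) * μ‖) := by
          have hmm : m = ‖μ‖ := hm
          apply mul_le_mul
          · exact mul_le_mul_of_nonneg_right hM2 (by positivity)
          · exact mul_le_mul_of_nonneg_left h1 (le_of_lt hm0)
          · positivity
          · positivity
  have hgeoB : Summable (fun n : ℕ => M * τ ^ n) :=
    (summable_geometric_of_lt_one (le_of_lt hτ) hτ').mul_left _
  have hBsum : Summable b := Summable.of_norm_bounded hgeoB hb_bound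
  have hBbnd : ‖∑' n : ℕ, b n‖ ≤ CB := by
    calc ‖∑' n : ℕ, b n‖ ≤ ∑' n : ℕ, ‖b n‖ := norm_tsum_le_tsum_norm
          (Summable.of_nonneg_of_le (fun n => norm_nonneg _) hb_bound hgeoB)
    _ ≤ ∑' n : ℕ, M * τ^n := Summable.tsum_le_tsum hb_bound
          (Summable.of_nonneg_of_le (fun n => norm_nonneg _) hb_bound hgeoB) hgeoB
    _ = M * (1-τ)⁻¹ := by
        rw [tsum_mul_left, tsum_geometric_of_lt_one (le_of_lt hτ) hτ']
    _ = CB := hCBeq.symm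
  -- geometric series for the singular part
  have hgeoZ : HasSum (fun n : ℕ => -μ⁻¹ * z ^ (-(n+1):ℤ)) (μ⁻¹ / (1 - z)) := by
    have h1 : HasSum (fun n : ℕ => (z⁻¹)^n) (1 - z⁻¹)⁻¹ :=
      hasSum_geometric_of_norm_lt_one hzinv
    have h2 := h1.mul_left (-μ⁻¹ * z⁻¹)
    have h3 : (fun n : ℕ => -μ⁻¹ * z⁻¹ * (z⁻¹)^n) = fun n : ℕ => -μ⁻¹ * z ^ (-(n+1):ℤ) := by
      funext n
      have : z ^ (-(n+1):ℤ) = (z⁻¹)^(n+1) := by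
        rw [← zpow_natCast z⁻¹ (n+1), inv_zpow, ← zpow_neg]
        norm_cast
      rw [this, pow_succ']
      ring
    rw [h3] at h2
    have h4 : -μ⁻¹ * z⁻¹ * (1 - z⁻¹)⁻¹ = μ⁻¹ / (1 - z) := by
      have hz1'' : z - 1 ≠ 0 := sub_ne_zero.mpr hz1'
      field_simp
      ring
    rwa [h4] at h2
  have hnegSum : HasSum (fun n : ℕ => g (-(n+1))) (μ⁻¹ / (1 - z) + ∑' n : ℕ, b n) := by
    have heq : (fun n : ℕ => g (-(n+1))) = fun n : ℕ => -μ⁻¹ * z ^ (-(n+1):ℤ) + b n :=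
      funext hsplit
    rw [heq]
    exact hgeoZ.add hBsum.hasSum
  have htotal : HasSum g ((∑' n : ℕ, g n) + (μ⁻¹ / (1 - z) + ∑' n : ℕ, b n)) :=
    HasSum.of_nat_of_neg_add_one hAsum.hasSum hnegSum
  have htsum : (∑' k : ℤ, g k) = (∑' n : ℕ, g n) + (μ⁻¹ / (1 - z) + ∑' n : ℕ, b n) :=
    htotal.tsum_eq
  rw [show (∑' k : ℤ, (↑τ : ℂ) ^ k * z ^ k / (1 - (↑τ : ℂ) ^ k * μ)) = ∑' k : ℤ, g k from rfl,
    htsum]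
  have : (∑' n : ℕ, g n) + (μ⁻¹ / (1 - z) + ∑' n : ℕ, b n) - μ⁻¹ / (1 - z)
      = (∑' n : ℕ, g n) + ∑' n : ℕ, b n := by ring
  rw [this]
  calc ‖(∑' n : ℕ, g n) + ∑' n : ℕ, b n‖
      ≤ ‖∑' n : ℕ, g n‖ + ‖∑' n : ℕ, b n‖ :=
        norm_add_le _ _
  _ ≤ CA + CB := by
      exact add_le_add hAbnd hBbnd
end

section
/- Let τ, r ∈ ℝ with 0 < τ < 1 and 1 < r < τ⁻¹, let x ∈ ℤ, and let j ∈ ℕ. Then there exists a polynomial P in two variables with complex coefficients (depending on τ, x, j) such that for every t ∈ ℂ and every η ∈ ℂ with |η| < r/τ, (2πi)⁻¹ ∮_{|ζ|=r} (1 − ζ)^{−x} · exp(t·ζ/(1 − ζ)) · ζ^j/(ζ − τ·η) dζ = e^{−t} · P(t, η). -/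
open Complex Real

lemma zpow_bound_interval {a b c : ℝ} (ha : 0 < a) (hab : a ≤ c) (hc : c ≤ b) (m : ℤ) :
    c ^ m ≤ max (a ^ m) (b ^ m) := by
  have hc0 : 0 < c := ha.trans_le hab
  rcases m with n | n
  · exact le_max_of_le_right (by simpa using pow_le_pow_left₀ hc0.le hc n)
  · refine le_max_of_le_left ?_
    simp only [zpow_negSucc]
    gcongr

noncomputable def Eint (m p : ℤ) (a : ℝ) : ℂ := ∮ ζ in C(0, a), (1 - ζ) ^ m * ζ ^ p

lemma Eint_diff (m p : ℤ) {ζ : ℂ} (h0 : ζ ≠ 0) (h1 : ζ ≠ 1) :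
    DifferentiableAt ℂ (fun ζ : ℂ => (1 - ζ) ^ m * ζ ^ p) ζ := by
  have hd1 : DifferentiableAt ℂ (fun ζ : ℂ => (1 - ζ) ^ m) ζ :=
    ((differentiableAt_const 1).sub differentiableAt_id).zpow
      (Or.inl (by simpa [sub_eq_zero] using fun h => h1 h.symm))
  exact hd1.mul (differentiableAt_id.zpow (Or.inl h0))

lemma Eint_ne01 {a : ℝ} (ha : 1 < a) {ζ : ℂ} (h : a ≤ ‖ζ‖) : ζ ≠ 0 ∧ ζ ≠ 1 := by
  constructor
  · rintro rfl; rw [norm_zero] at h; linarith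
  · rintro rfl; rw [norm_one] at h; linarith

lemma Eint_eq {m p : ℤ} {a b : ℝ} (ha : 1 < a) (hab : a ≤ b) :
    Eint m p b = Eint m p a := by
  refine circleIntegral_eq_of_differentiable_on_annulus_off_countable
    (by linarith) hab Set.countable_empty ?_ ?_
  · intro ζ hζ
    have h : a ≤ ‖ζ‖ := by
      have := hζ.2
      simp only [Metric.mem_ball, Complex.dist_eq, sub_zero, not_lt] at this
      linarith
    obtain ⟨h0, h1⟩ := Eint_ne01 ha h
    exact (Eint_diff m p h0 h1).continuousAt.continuousWithinAt
  · intro ζ hζ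
    have h : a ≤ ‖ζ‖ := by
      have := hζ.1.2
      simp only [Metric.mem_closedBall, Complex.dist_eq, sub_zero, not_le] at this
      linarith
    obtain ⟨h0, h1⟩ := Eint_ne01 ha h
    exact Eint_diff m p h0 h1

lemma two_zpow_le_natAbs (m : ℤ) : (2:ℝ) ^ m ≤ 2 ^ m.natAbs := by
  rw [← zpow_natCast]
  exact zpow_le_zpow_right₀ one_le_two Int.le_natAbs

lemma Eint_zero {m p : ℤ} {a : ℝ} (ha : 1 < a) (hmp : m + p ≤ -2) : Eint m p a = 0 := by
  set B : ℝ := 2 ^ m.natAbs with hBdef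
  have hB0 : (0:ℝ) < B := by positivity
  have key : ∀ R : ℝ, max a 2 ≤ R → ‖Eint m p a‖ ≤ 2 * π * B / R := by
    intro R hR
    have h2R : (2:ℝ) ≤ R := le_trans (le_max_right _ _) hR
    have haR : a ≤ R := le_trans (le_max_left _ _) hR
    have hR0 : (0:ℝ) < R := by linarith
    rw [← Eint_eq ha haR]
    have hb : ∀ ζ ∈ Metric.sphere (0:ℂ) R, ‖(1 - ζ) ^ m * ζ ^ p‖ ≤ B * R ^ (m + p) := by
      intro ζ hζ
      have hζR : ‖ζ‖ = R := by
        simpa [Complex.dist_eq] using hζ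
      have hlow : R / 2 ≤ ‖1 - ζ‖ := by
        have : ‖ζ‖ - ‖(1:ℂ)‖ ≤ ‖ζ - 1‖ := norm_sub_norm_le _ _
        rw [norm_sub_rev] at this
        rw [norm_one, hζR] at this
        linarith
      have hhigh : ‖1 - ζ‖ ≤ 2 * R := by
        have : ‖(1:ℂ) - ζ‖ ≤ ‖(1:ℂ)‖ + ‖ζ‖ := norm_sub_le _ _
        rw [norm_one, hζR] at this
        linarith
      have h1 : ‖(1 - ζ) ^ m‖ ≤ B * R ^ m := by
        rw [norm_zpow]
        calc ‖1 - ζ‖ ^ m ≤ max ((R/2) ^ m) ((2*R) ^ m) :=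
              zpow_bound_interval (by linarith) hlow hhigh m
        _ ≤ B * R ^ m := by
            apply max_le
            · rw [div_eq_inv_mul, mul_zpow]
              refine mul_le_mul_of_nonneg_right ?_ (zpow_nonneg hR0.le m)
              rw [inv_zpow, ← zpow_neg]
              have := two_zpow_le_natAbs (-m)
              rwa [Int.natAbs_neg] at this
            · rw [mul_zpow]
              exact mul_le_mul_of_nonneg_right (two_zpow_le_natAbs m) (zpow_nonneg hR0.le m)
      have h2 : ‖ζ ^ p‖ = R ^ p := by rw [norm_zpow, hζR]
      rw [norm_mul, h2, zpow_add₀ hR0.ne', ← mul_assoc]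
      exact mul_le_mul_of_nonneg_right h1 (zpow_nonneg hR0.le p)
    have hnorm := circleIntegral.norm_integral_le_of_norm_le_const hR0.le hb
    unfold Eint
    refine le_trans hnorm ?_
    have hRR : R * (B * R ^ (m + p)) ≤ B * R⁻¹ := by
      have h1 : R * (B * R ^ (m + p)) = B * R ^ (1 + (m + p)) := by
        rw [zpow_add₀ hR0.ne' 1 (m+p), zpow_one]; ring
      have h2 : R ^ (1 + (m + p)) ≤ R ^ (-1 : ℤ) :=
        zpow_le_zpow_right₀ (by linarith) (by omega)
      rw [h1, zpow_neg_one] at *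
      exact mul_le_mul_of_nonneg_left h2 hB0.le
    calc 2 * π * R * (B * R ^ (m+p)) = 2 * π * (R * (B * R^(m+p))) := by ring
    _ ≤ 2 * π * (B * R⁻¹) := mul_le_mul_of_nonneg_left hRR (by positivity)
    _ = 2 * π * B / R := by ring
  have htend : Filter.Tendsto (fun R : ℝ => 2 * π * B / R) Filter.atTop (nhds 0) :=
    Filter.Tendsto.div_atTop tendsto_const_nhds Filter.tendsto_id
  have hle : ‖Eint m p a‖ ≤ 0 :=
    ge_of_tendsto htend (Filter.eventually_atTop.2 ⟨max a 2, key⟩)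
  exact norm_le_zero_iff.mp hle
set_option maxHeartbeats 1000000

lemma hasSum_term (x : ℤ) (j : ℕ) (t w ζ : ℂ) (hζ1 : 1 < ‖ζ‖) (hw : ‖w‖ < ‖ζ‖) :
    HasSum (fun nk : ℕ × ℕ => (Complex.exp (-t) * (t ^ nk.1 / (nk.1.factorial : ℂ)) * w ^ nk.2) *
        ((1 - ζ) ^ (-(x + nk.1 : ℤ)) * ζ ^ ((j : ℤ) - 1 - nk.2)))
      ((1 - ζ) ^ (-x) * Complex.exp (t * ζ / (1 - ζ)) * ζ ^ j / (ζ - w)) := by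
  have hζ0 : ζ ≠ 0 := by rintro rfl; simp at hζ1; linarith
  have hu0 : (1 : ℂ) - ζ ≠ 0 := by
    intro h
    have : ζ = 1 := by linear_combination -h
    rw [this, norm_one] at hζ1; linarith
  have hζw : ζ - w ≠ 0 := by
    intro h
    have : ζ = w := by linear_combination h
    rw [this] at hw; linarith
  set u : ℂ := 1 - ζ with hu
  have hA : HasSum (fun n : ℕ => (t / u) ^ n / (n.factorial : ℂ)) (Complex.exp (t / u)) := by
    rw [Complex.exp_eq_exp_ℂ]
    exact NormedSpace.expSeries_div_hasSum_exp (t / u)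
  have hB : HasSum (fun k : ℕ => (w / ζ) ^ k) ((1 - w / ζ)⁻¹) := by
    apply hasSum_geometric_of_norm_lt_one
    rw [norm_div, div_lt_one (by linarith)]
    exact hw
  have hAn : Summable fun n : ℕ => ‖(t / u) ^ n / (n.factorial : ℂ)‖ := by
    have := Real.summable_pow_div_factorial ‖t / u‖
    refine this.congr fun n => ?_
    simp [norm_div, norm_pow]
  have hBn : Summable fun k : ℕ => ‖(w / ζ) ^ k‖ := by
    simp only [norm_pow]
    refine summable_geometric_of_lt_one (norm_nonneg _) ?_
    rw [norm_div, div_lt_one (by linarith)]; exact hw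
  have hs : Summable (fun nk : ℕ × ℕ => ((t / u) ^ nk.1 / (nk.1.factorial : ℂ)) * (w / ζ) ^ nk.2) :=
    summable_mul_of_summable_norm (f := fun n : ℕ => (t/u) ^ n / (n.factorial : ℂ))
      (g := fun k : ℕ => (w/ζ) ^ k) hAn hBn
  have hmul := hA.mul hB hs
  set c : ℂ := Complex.exp (-t) * u ^ (-x) * ζ ^ (j : ℤ) * ζ⁻¹ with hc
  have key := hmul.mul_left c
  have hfun : ∀ nk : ℕ × ℕ,
      c * ((t / u) ^ nk.1 / (nk.1.factorial : ℂ) * (w / ζ) ^ nk.2) =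
      (Complex.exp (-t) * (t ^ nk.1 / (nk.1.factorial : ℂ)) * w ^ nk.2) *
        ((1 - ζ) ^ (-(x + nk.1 : ℤ)) * ζ ^ ((j : ℤ) - 1 - nk.2)) := by
    intro ⟨n, k⟩
    have e1 : u ^ (-(x + n : ℤ)) = u ^ (-x) * (u ^ n)⁻¹ := by
      rw [← zpow_natCast u n, ← zpow_neg, ← zpow_add₀ hu0, neg_add]
    have e2 : ζ ^ ((j : ℤ) - 1 - k) = ζ ^ (j : ℤ) * ζ⁻¹ * (ζ ^ k)⁻¹ := by
      rw [← zpow_natCast ζ k, ← zpow_neg, ← zpow_neg_one ζ, ← zpow_add₀ hζ0, ← zpow_add₀ hζ0]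
      congr 1
    rw [← hu, e1, e2, hc]
    ring
  have hval : c * (Complex.exp (t / u) * (1 - w / ζ)⁻¹) =
      (1 - ζ) ^ (-x) * Complex.exp (t * ζ / (1 - ζ)) * ζ ^ j / (ζ - w) := by
    have hexp : Complex.exp (t * ζ / u) = Complex.exp (-t) * Complex.exp (t / u) := by
      rw [← Complex.exp_add]
      congr 1
      have hinv : (1 - ζ) * (1 - ζ)⁻¹ = 1 := mul_inv_cancel₀ hu0
      rw [hu]
      linear_combination (-t) * hinv
    have hgeo : (ζ - w)⁻¹ = (1 - w / ζ)⁻¹ * ζ⁻¹ := by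
      rw [← mul_inv]
      congr 1
      field_simp
    rw [← hu, hexp, div_eq_mul_inv _ (ζ - w), hgeo, hc, ← zpow_natCast ζ j]
    ring
  rw [funext hfun] at key
  rwa [hval] at key

lemma hasSum_circle (x : ℤ) (j : ℕ) (t w : ℂ) (r : ℝ) (hr : 1 < r) (hw : ‖w‖ < r) :
    HasSum
      (fun nk : ℕ × ℕ => (Complex.exp (-t) * (t ^ nk.1 / (nk.1.factorial : ℂ)) * w ^ nk.2) *
        Eint (-(x + nk.1 : ℤ)) ((j : ℤ) - 1 - nk.2) r)
      (∮ ζ in C(0, r), (1 - ζ) ^ (-x) * Complex.exp (t * ζ / (1 - ζ)) * ζ ^ j / (ζ - w)) := by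
  have hr0 : (0:ℝ) < r := by linarith
  have hmem : ∀ θ : ℝ, ‖circleMap 0 r θ‖ = r := by
    intro θ; rw [norm_circleMap_zero, abs_of_pos hr0]
  have hne0 : ∀ θ : ℝ, circleMap 0 r θ ≠ 0 := by
    intro θ h; have := hmem θ; rw [h, norm_zero] at this; linarith
  have hne1 : ∀ θ : ℝ, (1:ℂ) - circleMap 0 r θ ≠ 0 := by
    intro θ h
    have h1 : circleMap 0 r θ = 1 := by linear_combination -h
    have := hmem θ; rw [h1, norm_one] at this; linarith
  -- coefficients and bounds
  set c : ℕ × ℕ → ℂ := fun nk => Complex.exp (-t) * (t ^ nk.1 / (nk.1.factorial : ℂ)) * w ^ nk.2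
    with hcdef
  set Bx : ℝ := max ((r-1) ^ (-x)) ((r+1) ^ (-x)) with hBx
  set D : ℝ := r * (‖Complex.exp (-t)‖ * Bx * r ^ ((j:ℤ) - 1)) with hD
  have hBx0 : 0 < Bx := lt_max_of_lt_left (zpow_pos (by linarith) _)
  have hD0 : 0 ≤ D := by
    have : (0:ℝ) < r ^ ((j:ℤ)-1) := zpow_pos hr0 _
    positivity
  set F : ℕ × ℕ → ℝ → ℂ := fun nk θ =>
    deriv (circleMap 0 r) θ •
      (c nk • ((1 - circleMap 0 r θ) ^ (-(x + nk.1 : ℤ)) *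
        circleMap 0 r θ ^ ((j : ℤ) - 1 - nk.2))) with hF
  set bound : ℕ × ℕ → ℝ → ℝ := fun nk _ =>
    D * ((‖t‖ / (r-1)) ^ nk.1 / (nk.1.factorial : ℝ)) * (‖w‖ / r) ^ nk.2 with hbound
  have hTb : ∀ nk : ℕ × ℕ, ∀ θ : ℝ, ‖F nk θ‖ ≤ bound nk θ := by
    rintro ⟨n, k⟩ θ
    set ζ := circleMap 0 r θ with hζ
    have hu1 : r - 1 ≤ ‖1 - ζ‖ := by
      have h := norm_sub_norm_le ζ (1:ℂ)
      rw [norm_sub_rev, hmem θ, norm_one] at h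
      linarith
    have hu2 : ‖1 - ζ‖ ≤ r + 1 := by
      have h := norm_sub_le (1:ℂ) ζ
      rw [hmem θ, norm_one] at h
      linarith
    have hu0 : (0:ℝ) < r - 1 := by linarith
    have e0 : ‖deriv (circleMap 0 r) θ‖ = r := by
      rw [deriv_circleMap, norm_mul, Complex.norm_I, mul_one, hmem θ]
    have e1 : ‖(1 - ζ) ^ (-(x + n : ℤ))‖ ≤ Bx * ((r-1)⁻¹) ^ n := by
      rw [norm_zpow, neg_add, zpow_add₀ (by linarith : ‖1 - ζ‖ ≠ 0)]
      have b1 : ‖1 - ζ‖ ^ (-x) ≤ Bx := zpow_bound_interval hu0 hu1 hu2 (-x)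
      have b2 : ‖1 - ζ‖ ^ (-(n:ℤ)) ≤ ((r-1)⁻¹) ^ n := by
        rw [zpow_neg, zpow_natCast, ← inv_pow]
        exact pow_le_pow_left₀ (by positivity) (inv_anti₀ hu0 hu1) n
      exact mul_le_mul b1 b2 (zpow_nonneg (norm_nonneg _) _) hBx0.le
    have e2 : ‖ζ ^ ((j:ℤ) - 1 - k)‖ = r ^ ((j:ℤ) - 1) * (r⁻¹) ^ k := by
      rw [norm_zpow, hmem θ, zpow_sub₀ hr0.ne', zpow_natCast, div_eq_mul_inv, inv_pow]
    have e3 : ‖c (n, k)‖ = ‖Complex.exp (-t)‖ * (‖t‖ ^ n / (n.factorial : ℝ)) * ‖w‖ ^ k := by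
      rw [hcdef]
      simp [norm_mul, norm_div, norm_pow, Complex.norm_natCast]
    have hrw : bound (n, k) θ =
        r * (‖Complex.exp (-t)‖ * (‖t‖ ^ n / (n.factorial : ℝ)) * ‖w‖ ^ k *
          ((Bx * ((r-1)⁻¹) ^ n) * (r ^ ((j:ℤ) - 1) * (r⁻¹) ^ k))) := by
      simp only [hbound, hD]
      rw [div_pow, div_pow]
      simp only [div_eq_mul_inv, inv_pow]
      ring
    rw [hF]
    simp only [smul_eq_mul, norm_mul]
    rw [e0, e3, e2, hrw]
    have hE3 : (0:ℝ) ≤ ‖Complex.exp (-t)‖ * (‖t‖ ^ n / (n.factorial : ℝ)) * ‖w‖ ^ k := by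
      positivity
    have hZ : (0:ℝ) ≤ r ^ ((j:ℤ) - 1) * (r⁻¹) ^ k := by
      have : (0:ℝ) < r ^ ((j:ℤ)-1) := zpow_pos hr0 _
      positivity
    gcongr
  have hmeas : ∀ nk : ℕ × ℕ, Continuous (F nk) := by
    rintro ⟨n, k⟩
    simp only [hF]
    have hc1 : Continuous (circleMap 0 r) := continuous_circleMap 0 r
    have hd : Continuous (fun θ : ℝ => deriv (circleMap 0 r) θ) := by
      have hfe : (fun θ : ℝ => deriv (circleMap 0 r) θ)
          = fun θ => circleMap 0 r θ * Complex.I := funext fun θ => deriv_circleMap 0 r θ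
      rw [hfe]
      exact hc1.mul continuous_const
    refine hd.smul (Continuous.fun_const_smul ?_ _)
    exact ((continuous_const.sub hc1).zpow₀ _ fun θ => Or.inl (hne1 θ)).mul
      (hc1.zpow₀ _ fun θ => Or.inl (hne0 θ))
  have hsummable : Summable fun nk : ℕ × ℕ => bound nk 0 := by
    have h1 : Summable fun n : ℕ => ‖(‖t‖ / (r-1)) ^ n / (n.factorial : ℝ)‖ := by
      have hnn : (0:ℝ) ≤ ‖t‖ / (r-1) := by
        have : (0:ℝ) < r - 1 := by linarith
        positivity
      refine (Real.summable_pow_div_factorial (‖t‖ / (r-1))).congr fun n => ?_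
      exact (Real.norm_of_nonneg (by positivity)).symm
    have h2 : Summable fun k : ℕ => ‖(‖w‖ / r) ^ k‖ := by
      have hlt : ‖w‖ / r < 1 := by rw [div_lt_one hr0]; exact hw
      refine (summable_geometric_of_lt_one (div_nonneg (norm_nonneg w) hr0.le) hlt).congr
        fun k => ?_
      exact (Real.norm_of_nonneg (by positivity)).symm
    have := (summable_mul_of_summable_norm
      (f := fun n : ℕ => (‖t‖ / (r-1)) ^ n / (n.factorial : ℝ))
      (g := fun k : ℕ => (‖w‖ / r) ^ k) h1 h2).mul_left D
    refine this.congr fun nk => ?_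
    rw [hbound]
    ring
  have hsum : ∀ θ : ℝ, HasSum (fun nk : ℕ × ℕ => F nk θ)
      (deriv (circleMap 0 r) θ • ((1 - circleMap 0 r θ) ^ (-x) *
        Complex.exp (t * circleMap 0 r θ / (1 - circleMap 0 r θ)) *
        circleMap 0 r θ ^ j / (circleMap 0 r θ - w))) := by
    intro θ
    have := (hasSum_term x j t w (circleMap 0 r θ)
      (by rw [hmem θ]; exact hr) (by rw [hmem θ]; exact hw)).mul_left
      (deriv (circleMap 0 r) θ)
    refine this.congr fun nk => ?_
    simp only [hF, hcdef, smul_eq_mul]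
  have bint : IntervalIntegrable (fun θ : ℝ => ∑' nk : ℕ × ℕ, bound nk θ)
      MeasureTheory.volume 0 (2*π) := by
    simp only [hbound]
    exact intervalIntegrable_const
  have H := intervalIntegral.hasSum_integral_of_dominated_convergence
    (μ := MeasureTheory.volume) (a := 0) (b := 2 * π)
    (F := F)
    (f := fun θ => deriv (circleMap 0 r) θ • ((1 - circleMap 0 r θ) ^ (-x) *
        Complex.exp (t * circleMap 0 r θ / (1 - circleMap 0 r θ)) *
        circleMap 0 r θ ^ j / (circleMap 0 r θ - w)))
    bound
    (fun nk => (hmeas nk).aestronglyMeasurable)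
    (fun nk => Filter.Eventually.of_forall fun θ _ => hTb nk θ)
    (Filter.Eventually.of_forall fun θ _ => by
      refine (hsummable.congr fun nk => ?_)
      rw [hbound])
    bint
    (Filter.Eventually.of_forall fun θ _ => hsum θ)
  have hval : ∀ nk : ℕ × ℕ, (∫ θ in (0:ℝ)..(2*π), F nk θ) =
      c nk * Eint (-(x + nk.1 : ℤ)) ((j:ℤ) - 1 - nk.2) r := by
    intro nk
    have h2 := circleIntegral.integral_smul (𝕜 := ℂ) (c nk)
      (fun ζ => (1 - ζ) ^ (-(x + nk.1 : ℤ)) * ζ ^ ((j:ℤ) - 1 - nk.2)) 0 r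
    rw [smul_eq_mul] at h2
    exact h2
  have Hfun : (fun nk : ℕ × ℕ => c nk * Eint (-(x + nk.1 : ℤ)) ((j : ℤ) - 1 - nk.2) r)
      = fun nk => ∫ θ in (0:ℝ)..(2*π), F nk θ := funext fun nk => (hval nk).symm
  rw [Hfun]
  exact H

/-- The contour integral `(2πi)⁻¹∮_{|ζ|=r} (1-ζ)^{-x} e^{tζ/(1-ζ)} ζʲ/(ζ-τη) dζ`
equals `e^{-t}` times a polynomial in `t` and `η` depending only on `τ, x, j`
(Tracy–Widom, proof of Lemma 3 in Theorem 1). -/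
theorem stmt_17 (τ : ℝ) (hτ : 0 < τ) (hτ' : τ < 1) (x : ℤ) (j : ℕ) :
    ∃ P : MvPolynomial (Fin 2) ℂ,
      ∀ r : ℝ, 1 < r → r < τ⁻¹ →
        ∀ (t : ℂ) (η : ℂ), ‖η‖ < r / τ →
          (2 * ↑Real.pi * Complex.I)⁻¹ *
            (∮ ζ in C(0, r),
              (1 - ζ) ^ (-x) * Complex.exp (t * ζ / (1 - ζ)) * ζ ^ j / (ζ - ↑τ * η)) =
            Complex.exp (-t) * MvPolynomial.eval ![t, η] P := by
  set M : ℕ := (j - x + 1).toNat with hM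
  refine ⟨∑ n ∈ Finset.range M, ∑ k ∈ Finset.range M,
    MvPolynomial.C ((2 * ↑Real.pi * Complex.I)⁻¹ * ((n.factorial : ℂ))⁻¹ * (τ:ℂ)^k *
      Eint (-(x + n : ℤ)) ((j:ℤ) - 1 - k) 2) *
      MvPolynomial.X 0 ^ n * MvPolynomial.X 1 ^ k, ?_⟩
  intro r hr hrτ t η hη
  have hw : ‖(τ:ℂ) * η‖ < r := by
    rw [norm_mul, Complex.norm_real, Real.norm_of_nonneg hτ.le]
    calc τ * ‖η‖ < τ * (r / τ) := mul_lt_mul_of_pos_left hη hτ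
    _ = r := by field_simp
  have Hs := hasSum_circle x j t ((τ:ℂ) * η) r hr hw
  have hEq2 : ∀ n k : ℕ,
      Eint (-(x + n : ℤ)) ((j:ℤ) - 1 - k) r = Eint (-(x + n : ℤ)) ((j:ℤ) - 1 - k) 2 := by
    intro n k
    rcases le_total r 2 with h | h
    · exact (Eint_eq hr h).symm
    · exact Eint_eq one_lt_two h
  have hvanish : ∀ nk : ℕ × ℕ, nk ∉ Finset.range M ×ˢ Finset.range M →
      (Complex.exp (-t) * (t ^ nk.1 / (nk.1.factorial : ℂ)) * ((τ:ℂ) * η) ^ nk.2) *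
        Eint (-(x + nk.1 : ℤ)) ((j : ℤ) - 1 - nk.2) r = 0 := by
    rintro ⟨n, k⟩ hnk
    rw [Finset.mem_product] at hnk
    simp only [Finset.mem_range] at hnk
    have hMle : (j : ℤ) - x + 1 ≤ (M : ℤ) := by
      rw [hM]; exact Int.self_le_toNat _
    have hcase : M ≤ n ∨ M ≤ k := by omega
    have hle : -(x + (n:ℤ)) + ((j:ℤ) - 1 - k) ≤ -2 := by omega
    rw [Eint_zero hr hle, mul_zero]
  have hsum_eq : (∮ ζ in C(0, r),
        (1 - ζ) ^ (-x) * Complex.exp (t * ζ / (1 - ζ)) * ζ ^ j / (ζ - (τ:ℂ) * η)) =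
      ∑ nk ∈ Finset.range M ×ˢ Finset.range M,
        (Complex.exp (-t) * (t ^ nk.1 / (nk.1.factorial : ℂ)) * ((τ:ℂ) * η) ^ nk.2) *
          Eint (-(x + nk.1 : ℤ)) ((j : ℤ) - 1 - nk.2) r := by
    rw [← Hs.tsum_eq]
    exact tsum_eq_sum hvanish
  rw [hsum_eq, Finset.sum_product]
  simp only [map_sum, map_mul, map_pow, MvPolynomial.eval_C, MvPolynomial.eval_X,
    Matrix.cons_val_zero, Matrix.cons_val_one, Matrix.head_cons]
  rw [Finset.mul_sum, Finset.mul_sum]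
  refine Finset.sum_congr rfl fun n hn => ?_
  rw [Finset.mul_sum, Finset.mul_sum]
  refine Finset.sum_congr rfl fun k hk => ?_
  rw [hEq2 n k, mul_pow]
  ring
end

section
/- Let σ ∈ ℝ with 0 < σ < 1. Set c₁ = −1 + 2·√σ, c₃ = σ^{−1/6}·(1 − √σ)^{5/3}, and ξ = −√σ/(1 − √σ), and define g : ℝ → ℝ by g(y) = c₁/(1 − y) + 1/(1 − y)² + σ/y. Then g(ξ) = 0, the derivative of g vanishes at ξ, and the second derivative of g at ξ equals −2·c₃³. -/
open Real

/-- The saddle point `ξ` is a double critical point of the phase, with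
`g(ξ) = g'(ξ) = 0` and `g''(ξ) = -2c₃³` (Tracy–Widom, Theorem 3). -/
theorem stmt_18 (σ : ℝ) (hσ : 0 < σ) (hσ1 : σ < 1)
    (c₁ c₃ ξ : ℝ)
    (hc₁ : c₁ = -1 + 2 * Real.sqrt σ)
    (hc₃ : c₃ = σ ^ (-(1 / 6) : ℝ) * (1 - Real.sqrt σ) ^ ((5 : ℝ) / 3))
    (hξ : ξ = -Real.sqrt σ / (1 - Real.sqrt σ))
    (g : ℝ → ℝ)
    (hg : ∀ y : ℝ, g y = c₁ / (1 - y) + 1 / (1 - y) ^ 2 + σ / y) :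
    g ξ = 0 ∧ deriv g ξ = 0 ∧ deriv (deriv g) ξ = -2 * c₃ ^ 3 := by
  have hgE : g = fun y => c₁ / (1 - y) + 1 / (1 - y) ^ 2 + σ / y := funext hg
  subst hgE
  have hs0 : 0 < Real.sqrt σ := Real.sqrt_pos.mpr hσ
  have hs1 : Real.sqrt σ < 1 := by
    have := Real.sqrt_lt_sqrt hσ.le hσ1
    simpa using this
  set s := Real.sqrt σ with hsdef
  have hσs : σ = s ^ 2 := (Real.sq_sqrt hσ.le).symm
  have h1s : (1 : ℝ) - s ≠ 0 := ne_of_gt (by linarith)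
  have hξneg : ξ < 0 := by
    rw [hξ]
    exact div_neg_of_neg_of_pos (by linarith) (by linarith)
  have hξ0 : ξ ≠ 0 := ne_of_lt hξneg
  have hξ1 : (1 : ℝ) - ξ ≠ 0 := ne_of_gt (by linarith)
  -- first derivative
  have key1 : ∀ y : ℝ, y ≠ 0 → (1 : ℝ) - y ≠ 0 →
      HasDerivAt (fun y => c₁ / (1 - y) + 1 / (1 - y) ^ 2 + σ / y)
        (c₁ / (1 - y) ^ 2 + 2 / (1 - y) ^ 3 - σ / y ^ 2) y := by
    intro y hy h1y
    have d1 : HasDerivAt (fun x : ℝ => (1 : ℝ) - x) (-1) y := (hasDerivAt_id y).const_sub 1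
    have t1 : HasDerivAt (fun x : ℝ => c₁ / (1 - x)) (c₁ / (1 - y) ^ 2) y := by
      have h := (hasDerivAt_const y c₁).div d1 h1y
      refine h.congr_deriv ?_; field_simp; ring
    have t2 : HasDerivAt (fun x : ℝ => 1 / (1 - x) ^ 2) (2 / (1 - y) ^ 3) y := by
      have h := (hasDerivAt_const y (1 : ℝ)).div (d1.pow 2) (pow_ne_zero 2 h1y)
      refine h.congr_deriv ?_; simp only [Pi.pow_apply]; field_simp; ring
    have t3 : HasDerivAt (fun x : ℝ => σ / x) (-(σ / y ^ 2)) y := by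
      have h := (hasDerivAt_const y σ).div (hasDerivAt_id y) hy
      refine h.congr_deriv ?_; simp only [id_eq]; field_simp; ring
    have h := (t1.add t2).add t3
    exact h.congr_deriv (by ring)
  -- second derivative
  have key2 : ∀ y : ℝ, y ≠ 0 → (1 : ℝ) - y ≠ 0 →
      HasDerivAt (fun y => c₁ / (1 - y) ^ 2 + 2 / (1 - y) ^ 3 - σ / y ^ 2)
        (2 * c₁ / (1 - y) ^ 3 + 6 / (1 - y) ^ 4 + 2 * σ / y ^ 3) y := by
    intro y hy h1y
    have d1 : HasDerivAt (fun x : ℝ => (1 : ℝ) - x) (-1) y := (hasDerivAt_id y).const_sub 1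
    have t1 : HasDerivAt (fun x : ℝ => c₁ / (1 - x) ^ 2) (2 * c₁ / (1 - y) ^ 3) y := by
      have h := (hasDerivAt_const y c₁).div (d1.pow 2) (pow_ne_zero 2 h1y)
      refine h.congr_deriv ?_; simp only [Pi.pow_apply]; field_simp; ring
    have t2 : HasDerivAt (fun x : ℝ => 2 / (1 - x) ^ 3) (6 / (1 - y) ^ 4) y := by
      have h := (hasDerivAt_const y (2 : ℝ)).div (d1.pow 3) (pow_ne_zero 3 h1y)
      refine h.congr_deriv ?_; simp only [Pi.pow_apply]; field_simp; ring
    have t3 : HasDerivAt (fun x : ℝ => σ / x ^ 2) (-(2 * σ / y ^ 3)) y := by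
      have h := (hasDerivAt_const y σ).div ((hasDerivAt_id y).pow 2) (pow_ne_zero 2 hy)
      refine h.congr_deriv ?_; simp only [Pi.pow_apply, id_eq]; field_simp; ring
    have h := (t1.add t2).sub t3
    exact h.congr_deriv (by ring)
  have hEq : deriv (fun y => c₁ / (1 - y) + 1 / (1 - y) ^ 2 + σ / y) =ᶠ[nhds ξ]
      fun y => c₁ / (1 - y) ^ 2 + 2 / (1 - y) ^ 3 - σ / y ^ 2 := by
    filter_upwards [Iio_mem_nhds hξneg] with x hx
    exact (key1 x (ne_of_lt hx) (ne_of_gt (by simp at hx; linarith))).deriv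
  refine ⟨?_, ?_, ?_⟩
  · show c₁ / (1 - ξ) + 1 / (1 - ξ) ^ 2 + σ / ξ = 0
    rw [hc₁, hξ, hσs]
    rw [hξ] at hξ1
    field_simp [hs0.ne']
    ring
  · rw [(key1 ξ hξ0 hξ1).deriv]
    rw [hc₁, hξ, hσs]
    rw [hξ] at hξ1 hξ0
    field_simp [hs0.ne']
    ring
  · rw [hEq.deriv_eq, (key2 ξ hξ0 hξ1).deriv]
    have hc3 : c₃ ^ 3 = (1 - s) ^ 5 / s := by
      rw [hc₃, mul_pow]
      rw [← Real.rpow_natCast (σ ^ (-(1 / 6) : ℝ)) 3, ← Real.rpow_natCast ((1 - s) ^ ((5 : ℝ) / 3)) 3]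
      rw [← Real.rpow_mul hσ.le, ← Real.rpow_mul (by linarith)]
      norm_num
      rw [Real.rpow_neg hσ.le, ← Real.sqrt_eq_rpow, ← hsdef]
      field_simp
    rw [hc3, hc₁, hξ, hσs]
    rw [hξ] at hξ1 hξ0
    field_simp [hs0.ne']
    ring
end

section
/- Let σ, s ∈ ℝ with 0 < σ < 1. Set c₁ = −1 + 2√σ, c₂ = σ^{−1/6}(1 − √σ)^{2/3}, c₃ = σ^{−1/6}(1 − √σ)^{5/3}, and ξ = −√σ/(1 − √σ). For real t > 0 put x(t) = c₁·t + c₂·s·t^{1/3} and m(t) = σ·t, and define ψ_t : ℂ → ℂ by ψ_t(w) = −x(t)·Log((1 − w)/(1 − ξ)) + t·(w/(1 − w) − ξ/(1 − ξ)) + m(t)·Log(w/ξ), where Log is the principal complex logarithm. Then for every ζ ∈ ℂ, ψ_t(ξ + c₃⁻¹·t^{−1/3}·ζ) → −ζ³/3 + s·ζ as t → ∞. -/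
open Complex Real Filter Topology

noncomputable def gTW (z : ℂ) : ℂ := Complex.log (1 + z) - (z - z ^ 2 / 2 + z ^ 3 / 3)

noncomputable def hTW (z : ℂ) : ℂ := gTW z / z ^ 3

lemma logTaylor_four (z : ℂ) :
    Complex.logTaylor 4 z = z - z ^ 2 / 2 + z ^ 3 / 3 := by
  simp [Complex.logTaylor_succ, Complex.logTaylor_zero, Pi.add_apply]
  norm_num
  ring

lemma gTW_bound {z : ℂ} (hz : ‖z‖ ≤ 1 / 2) : ‖gTW z‖ ≤ ‖z‖ ^ 4 / 2 := by
  have h1 : ‖z‖ < 1 := lt_of_le_of_lt hz (by norm_num)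
  have h := Complex.norm_log_sub_logTaylor_le 3 h1
  rw [show (3:ℕ) + 1 = 4 from rfl, logTaylor_four] at h
  have h2 : (1 - ‖z‖)⁻¹ ≤ 2 := by
    rw [inv_le_comm₀ (by linarith) (by norm_num)]
    linarith
  calc ‖gTW z‖ ≤ ‖z‖ ^ 4 * (1 - ‖z‖)⁻¹ / ((3:ℕ) + 1) := h
    _ ≤ ‖z‖ ^ 4 * 2 / ((3:ℕ)+1) := by gcongr
    _ ≤ ‖z‖ ^ 4 / 2 := by push_cast; ring_nf; rfl

lemma hTW_tendsto : Tendsto hTW (𝓝 0) (𝓝 0) := by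
  apply squeeze_zero_norm' (a := fun z : ℂ => ‖z‖)
  · have hball : ∀ᶠ z : ℂ in 𝓝 0, ‖z‖ ≤ 1 / 2 := by
      have := Metric.closedBall_mem_nhds (0 : ℂ) (by norm_num : (0:ℝ) < 1/2)
      filter_upwards [this] with z hz
      simpa [Metric.mem_closedBall, dist_eq_norm] using hz
    filter_upwards [hball] with z hz
    rcases eq_or_ne z 0 with rfl | hz0
    · simp [hTW, gTW]
    · rw [hTW, norm_div, norm_pow, div_le_iff₀ (pow_pos (norm_pos_iff.mpr hz0) 3)]
      calc ‖gTW z‖ ≤ ‖z‖ ^ 4 / 2 := gTW_bound hz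
        _ ≤ ‖z‖ * ‖z‖ ^ 3 := by nlinarith [norm_nonneg z, pow_pos (norm_pos_iff.mpr hz0) 3]
  · exact tendsto_norm_zero

lemma log_eq_gTW (z : ℂ) :
    Complex.log (1 + z) = gTW z + (z - z ^ 2 / 2 + z ^ 3 / 3) := by
  unfold gTW; ring

lemma gTW_eq_hTW {z : ℂ} (hz : z ≠ 0) : gTW z = z ^ 3 * hTW z := by
  unfold hTW
  rw [mul_comm, div_mul_cancel₀ _ (pow_ne_zero 3 hz)]

set_option maxHeartbeats 1600000 in
/-- Cubic scaling limit of the phase at the coalescing saddle point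
(Tracy–Widom, proof of Theorem 3):
`ψ_t(ξ + c₃⁻¹ t^{-1/3} ζ) → -ζ³/3 + sζ` as `t → ∞`. -/
theorem stmt_19 (σ s : ℝ) (hσ : 0 < σ) (hσ1 : σ < 1)
    (c₁ c₂ c₃ ξ : ℝ)
    (hc₁ : c₁ = -1 + 2 * Real.sqrt σ)
    (hc₂ : c₂ = σ ^ (-(1 / 6) : ℝ) * (1 - Real.sqrt σ) ^ ((2 : ℝ) / 3))
    (hc₃ : c₃ = σ ^ (-(1 / 6) : ℝ) * (1 - Real.sqrt σ) ^ ((5 : ℝ) / 3))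
    (hξ : ξ = -Real.sqrt σ / (1 - Real.sqrt σ))
    (x m : ℝ → ℝ)
    (hx : ∀ t : ℝ, x t = c₁ * t + c₂ * s * t ^ ((1 : ℝ) / 3))
    (hm : ∀ t : ℝ, m t = σ * t)
    (ψ : ℝ → ℂ → ℂ)
    (hψ : ∀ (t : ℝ) (w : ℂ),
      ψ t w = -(x t : ℂ) * Complex.log ((1 - w) / (1 - (ξ : ℂ))) +
        (t : ℂ) * (w / (1 - w) - (ξ : ℂ) / (1 - (ξ : ℂ))) +
        (m t : ℂ) * Complex.log (w / (ξ : ℂ)))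
    (ζ : ℂ) :
    Tendsto (fun t : ℝ => ψ t ((ξ : ℂ) + ((c₃ : ℂ))⁻¹ * ((t ^ (-(1 / 3) : ℝ) : ℝ) : ℂ) * ζ))
      atTop (nhds (-ζ ^ 3 / 3 + (s : ℂ) * ζ)) := by
  -- real constants
  obtain ⟨r, hrdef⟩ : ∃ r : ℝ, r = Real.sqrt σ := ⟨_, rfl⟩
  rw [← hrdef] at hc₁ hc₂ hc₃ hξ
  have hr0 : 0 < r := hrdef ▸ Real.sqrt_pos.mpr hσ
  have hrsq : r ^ 2 = σ := hrdef ▸ Real.sq_sqrt hσ.le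
  have hr1 : r < 1 := by nlinarith
  have h1r : 0 < 1 - r := by linarith
  have hξneg : ξ < 0 := by rw [hξ]; exact div_neg_of_neg_of_pos (by linarith) h1r
  have hξne : ξ ≠ 0 := ne_of_lt hξneg
  obtain ⟨A, hAdef⟩ : ∃ a : ℝ, a = 1 - ξ := ⟨_, rfl⟩
  have hA0 : 0 < A := by rw [hAdef]; linarith
  have hAv : A = (1 - r)⁻¹ := by
    rw [hAdef, hξ]; field_simp; ring
  have hc₃0 : 0 < c₃ := by
    rw [hc₃]
    exact mul_pos (Real.rpow_pos_of_pos hσ _) (Real.rpow_pos_of_pos h1r _)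
  obtain ⟨K, hKdef⟩ : ∃ k : ℝ, k = c₃⁻¹ := ⟨_, rfl⟩
  have hK0 : 0 < K := hKdef ▸ inv_pos.mpr hc₃0
  have hc₂c₃ : c₂ * (1 - r) = c₃ := by
    have h23 : (1 - r) ^ ((2:ℝ)/3) * (1 - r) ^ (1:ℝ) = (1 - r) ^ ((5:ℝ)/3) := by
      rw [← Real.rpow_add h1r]; norm_num
    rw [Real.rpow_one] at h23
    rw [hc₂, hc₃, mul_assoc, h23]
  have hk1 : c₂ * ((1 - r) * K) = 1 := by
    rw [hKdef, ← mul_assoc, hc₂c₃, mul_inv_cancel₀ (ne_of_gt hc₃0)]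
  have hc₃cube : c₃ ^ 3 * r = (1 - r) ^ 5 := by
    have e1 : (σ ^ (-(1/6):ℝ)) ^ (3:ℕ) = σ ^ (-(1/2):ℝ) := by
      rw [← Real.rpow_natCast (σ ^ (-(1/6):ℝ)) 3, ← Real.rpow_mul hσ.le]; norm_num
    have e2 : ((1-r) ^ ((5:ℝ)/3)) ^ (3:ℕ) = (1-r) ^ (5:ℕ) := by
      rw [← Real.rpow_natCast ((1-r) ^ ((5:ℝ)/3)) 3, ← Real.rpow_mul h1r.le,
        show ((5:ℝ)/3 * (3:ℕ) : ℝ) = ((5:ℕ):ℝ) by norm_num, Real.rpow_natCast]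
    have e3 : σ ^ (-(1/2):ℝ) * r = 1 := by
      have hs : σ ^ ((1:ℝ)/2) = r := by rw [hrdef, Real.sqrt_eq_rpow]
      rw [show (-(1/2):ℝ) = -((1:ℝ)/2) by norm_num, Real.rpow_neg hσ.le, hs]
      field_simp
    rw [hc₃, mul_pow, e1, e2, mul_assoc, mul_comm (((1:ℝ)-r)^(5:ℕ)) r, ← mul_assoc]
    rw [e3, one_mul]
  have hK3 : K ^ 3 * (1 - r) ^ 5 = r := by
    have h5 : (1-r) ^ (5:ℕ) = r * c₃ ^ 3 := by rw [← hc₃cube]; ring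
    rw [hKdef, inv_pow, h5]
    field_simp
  -- complex casts
  have hAc0 : ((A:ℝ):ℂ) ≠ 0 := Complex.ofReal_ne_zero.mpr (ne_of_gt hA0)
  have hξc0 : ((ξ:ℝ):ℂ) ≠ 0 := Complex.ofReal_ne_zero.mpr hξne
  have h1rc : (1:ℂ) - (r:ℂ) ≠ 0 := by
    have := Complex.ofReal_ne_zero.mpr (ne_of_gt h1r)
    push_cast at this
    convert this using 1
  have hrc0 : ((r:ℝ):ℂ) ≠ 0 := Complex.ofReal_ne_zero.mpr (ne_of_gt hr0)
  have hKc0 : ((K:ℝ):ℂ) ≠ 0 := Complex.ofReal_ne_zero.mpr (ne_of_gt hK0)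
  obtain ⟨ξi, hξidef⟩ : ∃ a : ℝ, a = ξ⁻¹ := ⟨_, rfl⟩
  have hξine : ((ξi:ℝ):ℂ) ≠ 0 :=
    Complex.ofReal_ne_zero.mpr (hξidef ▸ inv_ne_zero hξne)
  have hξiξc : ((ξ:ℝ):ℂ) * ((ξi:ℝ):ℂ) = 1 := by
    have h' : ξ * ξi = 1 := by rw [hξidef]; field_simp
    exact_mod_cast h'
  have hξiR : (r:ℂ) * ((ξi:ℝ):ℂ) = -(1 - (r:ℂ)) := by
    have h' : r * ξi = -(1 - r) := by
      rw [hξidef, hξ]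
      rw [inv_div]
      field_simp [hr0.ne', h1r.ne']
    exact_mod_cast h'
  have hAc : ((A:ℝ):ℂ) = ((1:ℂ) - (r:ℂ))⁻¹ := by rw [hAv]; push_cast; ring
  have hξc : ((ξ:ℝ):ℂ) = -(r:ℂ) / (1 - (r:ℂ)) := by rw [hξ]; push_cast; ring
  have hξAc : ((ξ:ℝ):ℂ) = 1 - ((A:ℝ):ℂ) := by rw [hAdef]; push_cast; ring
  have h1ξA : (1:ℂ) - ((ξ:ℝ):ℂ) = ((A:ℝ):ℂ) := by rw [hAdef]; push_cast; ring
  have hσc : ((σ:ℝ):ℂ) = (r:ℂ) ^ 2 := by rw [← hrsq]; push_cast; ring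
  have hc₁c : ((c₁:ℝ):ℂ) = -1 + 2 * (r:ℂ) := by rw [hc₁]; push_cast; ring
  have hk1c : ((c₂:ℝ):ℂ) * ((1 - (r:ℂ)) * ((K:ℝ):ℂ)) = 1 := by exact_mod_cast hk1
  have hK3c : ((K:ℝ):ℂ) ^ 3 * (1 - (r:ℂ)) ^ 5 = (r:ℂ) := by exact_mod_cast hK3
  have hc₃K : ((c₃:ℝ):ℂ)⁻¹ = ((K:ℝ):ℂ) := by rw [hKdef]; push_cast; ring
  -- the case ζ = 0
  rcases eq_or_ne ζ 0 with rfl | hζ0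
  · have hval : ∀ t : ℝ, ψ t ((ξ:ℝ):ℂ) = 0 := by
      intro t
      rw [hψ, div_self (h1ξA ▸ hAc0), div_self hξc0, Complex.log_one]
      ring
    have : (fun t : ℝ => ψ t ((ξ : ℂ) + ((c₃ : ℂ))⁻¹ * ((t ^ (-(1 / 3) : ℝ) : ℝ) : ℂ) * 0))
        = fun _ : ℝ => (0:ℂ) := by
      funext t; rw [mul_zero, add_zero, hval]
    rw [this, show -(0:ℂ) ^ 3 / 3 + (s:ℂ) * 0 = 0 by ring]
    exact tendsto_const_nhds
  -- auxiliary complex constants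
  obtain ⟨cz1, hcz1⟩ : ∃ z : ℂ, z = -(((K:ℝ):ℂ) * ζ * (1 - (r:ℂ))) := ⟨_, rfl⟩
  obtain ⟨cz2, hcz2⟩ : ∃ z : ℂ, z = ((K:ℝ):ℂ) * ζ * ((ξi:ℝ):ℂ) := ⟨_, rfl⟩
  obtain ⟨C2, hC2⟩ : ∃ z : ℂ, z = ((c₂:ℝ):ℂ) * (s:ℂ) * (1 - (r:ℂ)) ^ 2 * ((K:ℝ):ℂ) ^ 2 / 2 * ζ ^ 2 := ⟨_, rfl⟩
  obtain ⟨C3, hC3⟩ : ∃ z : ℂ, z = ((c₂:ℝ):ℂ) * (s:ℂ) * (1 - (r:ℂ)) ^ 3 * ((K:ℝ):ℂ) ^ 3 / 3 * ζ ^ 3 := ⟨_, rfl⟩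
  have hcz1ne : cz1 ≠ 0 := by
    rw [hcz1]
    exact neg_ne_zero.mpr (mul_ne_zero (mul_ne_zero hKc0 hζ0) h1rc)
  have hcz2ne : cz2 ≠ 0 := by
    rw [hcz2]
    exact mul_ne_zero (mul_ne_zero hKc0 hζ0) hξine
  -- basic limits
  have hu0 : Tendsto (fun t : ℝ => ((t ^ (-(1/3) : ℝ) : ℝ) : ℂ)) atTop (𝓝 0) := by
    have h1 : Tendsto (fun t : ℝ => t ^ (-(1/3) : ℝ)) atTop (𝓝 0) := by
      simpa using tendsto_rpow_neg_atTop (y := 1/3) (by norm_num)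
    rw [show (0:ℂ) = ((0:ℝ):ℂ) by norm_num]
    exact (Complex.continuous_ofReal.tendsto _).comp h1
  have hε0 : Tendsto (fun t : ℝ => ((K:ℝ):ℂ) * ((t ^ (-(1/3) : ℝ) : ℝ) : ℂ) * ζ) atTop (𝓝 0) := by
    simpa using (hu0.const_mul ((K:ℝ):ℂ)).mul_const ζ
  have hev : ∀ᶠ t : ℝ in atTop,
      0 < t ∧ ‖((K:ℝ):ℂ) * ((t ^ (-(1/3) : ℝ) : ℝ) : ℂ) * ζ‖ < A := by
    refine (eventually_gt_atTop 0).and ?_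
    have hn : Tendsto (fun t : ℝ => ‖((K:ℝ):ℂ) * ((t ^ (-(1/3) : ℝ) : ℝ) : ℂ) * ζ‖)
        atTop (𝓝 0) := by simpa using hε0.norm
    exact hn.eventually_lt_const hA0
  -- master eventual identity
  have master : ∀ᶠ t : ℝ in atTop,
      ψ t ((ξ : ℂ) + ((c₃ : ℂ))⁻¹ * ((t ^ (-(1 / 3) : ℝ) : ℝ) : ℂ) * ζ)
      = ((s:ℂ) * ζ - ζ ^ 3 / 3 + C2 * ((t ^ (-(1/3) : ℝ) : ℝ) : ℂ)
          + C3 * ((t ^ (-(1/3) : ℝ) : ℝ) : ℂ) ^ 2)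
        + ((-(cz1 ^ 3) * (((c₁:ℝ):ℂ) + ((c₂:ℝ):ℂ) * (s:ℂ) * ((t ^ (-(1/3) : ℝ) : ℝ) : ℂ) ^ 2))
              * hTW (cz1 * ((t ^ (-(1/3) : ℝ) : ℝ) : ℂ))
            + (((σ:ℝ):ℂ) * cz2 ^ 3) * hTW (cz2 * ((t ^ (-(1/3) : ℝ) : ℝ) : ℂ))
            + ((K:ℝ):ℂ) ^ 4 * ζ ^ 4 * ((t ^ (-(1/3) : ℝ) : ℝ) : ℂ)
              / (((A:ℝ):ℂ) ^ 4 * (((A:ℝ):ℂ) - ((K:ℝ):ℂ) * ((t ^ (-(1/3) : ℝ) : ℝ) : ℂ) * ζ))) := by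
    filter_upwards [hev] with t htev
    obtain ⟨ht, hsm⟩ := htev
    obtain ⟨ut, hut⟩ : ∃ u : ℝ, u = t ^ (-(1/3) : ℝ) := ⟨_, rfl⟩
    obtain ⟨vt, hvt⟩ : ∃ v : ℝ, v = t ^ ((1:ℝ)/3) := ⟨_, rfl⟩
    rw [← hut] at hsm ⊢
    have hv0 : 0 < vt := hvt ▸ Real.rpow_pos_of_pos ht _
    have hu0t : 0 < ut := hut ▸ Real.rpow_pos_of_pos ht _
    have hvc0 : ((vt:ℝ):ℂ) ≠ 0 := Complex.ofReal_ne_zero.mpr (ne_of_gt hv0)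
    have huc0 : ((ut:ℝ):ℂ) ≠ 0 := Complex.ofReal_ne_zero.mpr (ne_of_gt hu0t)
    have hucv : ((ut:ℝ):ℂ) = 1 / ((vt:ℝ):ℂ) := by
      have h' : ut = vt⁻¹ := by rw [hut, hvt]; exact Real.rpow_neg ht.le _
      rw [h']; push_cast; ring
    have htvc : ((t:ℝ):ℂ) = ((vt:ℝ):ℂ) ^ 3 := by
      have h' : vt ^ (3:ℕ) = t := by
        rw [hvt, ← Real.rpow_natCast (t ^ ((1:ℝ)/3)) 3, ← Real.rpow_mul ht.le]; norm_num
      rw [← h']; push_cast; ring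
    have hAεne : ((A:ℝ):ℂ) - ((K:ℝ):ℂ) * ((ut:ℝ):ℂ) * ζ ≠ 0 := by
      intro h
      rw [sub_eq_zero] at h
      rw [← h, Complex.norm_real, Real.norm_eq_abs, abs_of_pos hA0] at hsm
      exact lt_irrefl _ hsm
    have hz1ne : cz1 * ((ut:ℝ):ℂ) ≠ 0 := mul_ne_zero hcz1ne huc0
    have hz2ne : cz2 * ((ut:ℝ):ℂ) ≠ 0 := mul_ne_zero hcz2ne huc0
    rw [hψ, hc₃K]
    have hargA : ((1:ℂ) - (((ξ:ℝ):ℂ) + ((K:ℝ):ℂ) * ((ut:ℝ):ℂ) * ζ)) / (1 - ((ξ:ℝ):ℂ))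
        = 1 + cz1 * ((ut:ℝ):ℂ) := by
      rw [show (1:ℂ) - (((ξ:ℝ):ℂ) + ((K:ℝ):ℂ) * ((ut:ℝ):ℂ) * ζ)
            = ((A:ℝ):ℂ) - ((K:ℝ):ℂ) * ((ut:ℝ):ℂ) * ζ from by rw [hξAc]; ring,
         h1ξA, hAc, hcz1]
      field_simp [h1rc]
      ring
    have hargB : (((ξ:ℝ):ℂ) + ((K:ℝ):ℂ) * ((ut:ℝ):ℂ) * ζ) / ((ξ:ℝ):ℂ)
        = 1 + cz2 * ((ut:ℝ):ℂ) := by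
      rw [hcz2]
      field_simp [hξc0]
      linear_combination (-(((K:ℝ):ℂ) * ((ut:ℝ):ℂ) * ζ)) * hξiξc
    rw [hargA, hargB, log_eq_gTW, log_eq_gTW, gTW_eq_hTW hz1ne, gTW_eq_hTW hz2ne]
    generalize hTW (cz1 * ((ut:ℝ):ℂ)) = H1
    generalize hTW (cz2 * ((ut:ℝ):ℂ)) = H2
    have stepC : ((t:ℝ):ℂ) * ((((ξ:ℝ):ℂ) + ((K:ℝ):ℂ) * ((ut:ℝ):ℂ) * ζ)
            / (1 - (((ξ:ℝ):ℂ) + ((K:ℝ):ℂ) * ((ut:ℝ):ℂ) * ζ)) - ((ξ:ℝ):ℂ) / (1 - ((ξ:ℝ):ℂ)))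
        = ((t:ℝ):ℂ) * ((((K:ℝ):ℂ) * ((ut:ℝ):ℂ) * ζ) / ((A:ℝ):ℂ) ^ 2
            + (((K:ℝ):ℂ) * ((ut:ℝ):ℂ) * ζ) ^ 2 / ((A:ℝ):ℂ) ^ 3
            + (((K:ℝ):ℂ) * ((ut:ℝ):ℂ) * ζ) ^ 3 / ((A:ℝ):ℂ) ^ 4)
          + ((t:ℝ):ℂ) * (((K:ℝ):ℂ) * ((ut:ℝ):ℂ) * ζ) ^ 4
            / (((A:ℝ):ℂ) ^ 4 * (((A:ℝ):ℂ) - ((K:ℝ):ℂ) * ((ut:ℝ):ℂ) * ζ)) := by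
      rw [show (1:ℂ) - (((ξ:ℝ):ℂ) + ((K:ℝ):ℂ) * ((ut:ℝ):ℂ) * ζ)
            = ((A:ℝ):ℂ) - ((K:ℝ):ℂ) * ((ut:ℝ):ℂ) * ζ from by rw [hξAc]; ring,
         h1ξA, hξAc]
      field_simp [hAc0, hAεne]
      ring
    rw [stepC]
    have hfrac : ((t:ℝ):ℂ) * (((K:ℝ):ℂ) * ((ut:ℝ):ℂ) * ζ) ^ 4
          / (((A:ℝ):ℂ) ^ 4 * (((A:ℝ):ℂ) - ((K:ℝ):ℂ) * ((ut:ℝ):ℂ) * ζ))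
        = ((K:ℝ):ℂ) ^ 4 * ζ ^ 4 * ((ut:ℝ):ℂ)
          / (((A:ℝ):ℂ) ^ 4 * (((A:ℝ):ℂ) - ((K:ℝ):ℂ) * ((ut:ℝ):ℂ) * ζ)) := by
      congr 1
      rw [htvc, hucv]
      field_simp [hvc0]
    rw [hfrac]
    generalize ((K:ℝ):ℂ) ^ 4 * ζ ^ 4 * ((ut:ℝ):ℂ)
        / (((A:ℝ):ℂ) ^ 4 * (((A:ℝ):ℂ) - ((K:ℝ):ℂ) * ((ut:ℝ):ℂ) * ζ)) = F
    have hT2 : ((t:ℝ):ℂ) * ((((K:ℝ):ℂ) * ((ut:ℝ):ℂ) * ζ) / ((A:ℝ):ℂ) ^ 2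
            + (((K:ℝ):ℂ) * ((ut:ℝ):ℂ) * ζ) ^ 2 / ((A:ℝ):ℂ) ^ 3
            + (((K:ℝ):ℂ) * ((ut:ℝ):ℂ) * ζ) ^ 3 / ((A:ℝ):ℂ) ^ 4)
        = ((t:ℝ):ℂ) * ((((K:ℝ):ℂ) * ((ut:ℝ):ℂ) * ζ) * (1 - (r:ℂ)) ^ 2
            + (((K:ℝ):ℂ) * ((ut:ℝ):ℂ) * ζ) ^ 2 * (1 - (r:ℂ)) ^ 3
            + (((K:ℝ):ℂ) * ((ut:ℝ):ℂ) * ζ) ^ 3 * (1 - (r:ℂ)) ^ 4) := by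
      rw [hAc]
      field_simp
    rw [hT2]
    have e1c : ((vt:ℝ):ℂ) * ((ut:ℝ):ℂ) = 1 := by
      have h' : vt * ut = 1 := by rw [hvt, hut, ← Real.rpow_add ht]; norm_num
      exact_mod_cast h'
    have ha : -((x t:ℝ):ℂ) * (cz1 * ((ut:ℝ):ℂ)) ^ 3
        = -(cz1 ^ 3) * (((c₁:ℝ):ℂ) + ((c₂:ℝ):ℂ) * (s:ℂ) * ((ut:ℝ):ℂ) ^ 2) := by
      rw [hx]
      push_cast
      rw [← hvt, htvc]
      linear_combination (-(cz1 ^ 3) * (((c₁:ℝ):ℂ) * ((((vt:ℝ):ℂ) * ((ut:ℝ):ℂ)) ^ 2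
        + ((vt:ℝ):ℂ) * ((ut:ℝ):ℂ) + 1) + ((c₂:ℝ):ℂ) * (s:ℂ) * ((ut:ℝ):ℂ) ^ 2)) * e1c
    have hb : ((m t:ℝ):ℂ) * (cz2 * ((ut:ℝ):ℂ)) ^ 3 = ((σ:ℝ):ℂ) * cz2 ^ 3 := by
      rw [hm]
      push_cast
      rw [htvc, hσc]
      linear_combination ((r:ℂ) ^ 2 * cz2 ^ 3 * ((((vt:ℝ):ℂ) * ((ut:ℝ):ℂ)) ^ 2
        + ((vt:ℝ):ℂ) * ((ut:ℝ):ℂ) + 1)) * e1c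
    have hc : (r:ℂ) * (-((x t:ℝ):ℂ) * ((cz1 * ((ut:ℝ):ℂ)) - (cz1 * ((ut:ℝ):ℂ)) ^ 2 / 2
            + (cz1 * ((ut:ℝ):ℂ)) ^ 3 / 3)
          + ((t:ℝ):ℂ) * ((((K:ℝ):ℂ) * ((ut:ℝ):ℂ) * ζ) * (1 - (r:ℂ)) ^ 2
            + (((K:ℝ):ℂ) * ((ut:ℝ):ℂ) * ζ) ^ 2 * (1 - (r:ℂ)) ^ 3
            + (((K:ℝ):ℂ) * ((ut:ℝ):ℂ) * ζ) ^ 3 * (1 - (r:ℂ)) ^ 4)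
          + ((m t:ℝ):ℂ) * ((cz2 * ((ut:ℝ):ℂ)) - (cz2 * ((ut:ℝ):ℂ)) ^ 2 / 2
            + (cz2 * ((ut:ℝ):ℂ)) ^ 3 / 3))
        = (r:ℂ) * (((s:ℂ) * ζ - ζ ^ 3 / 3) + C2 * ((ut:ℝ):ℂ) + C3 * ((ut:ℝ):ℂ) ^ 2) := by
      rw [hx, hm]
      push_cast
      rw [← hvt, htvc, hσc, hc₁c, hC2, hC3, hcz1, hcz2]
      linear_combination
        (((-(r:ℂ) * (-1 + 2*(r:ℂ)) * (-(((K:ℝ):ℂ) * ζ * (1 - (r:ℂ))))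
            + (r:ℂ) * ((K:ℝ):ℂ) * ζ * (1 - (r:ℂ)) ^ 2
            + (r:ℂ) ^ 3 * (((K:ℝ):ℂ) * ζ * ((ξi:ℝ):ℂ))) * ((vt:ℝ):ℂ) ^ 2
          + ((r:ℂ) * (-1 + 2*(r:ℂ)) * (-(((K:ℝ):ℂ) * ζ * (1 - (r:ℂ)))) ^ 2 / 2
            + (r:ℂ) * ((K:ℝ):ℂ) ^ 2 * ζ ^ 2 * (1 - (r:ℂ)) ^ 3
            - (r:ℂ) ^ 3 * (((K:ℝ):ℂ) * ζ * ((ξi:ℝ):ℂ)) ^ 2 / 2) * ((vt:ℝ):ℂ)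
            * (1 + ((vt:ℝ):ℂ) * ((ut:ℝ):ℂ))
          + (-(r:ℂ) * (-1 + 2*(r:ℂ)) * (-(((K:ℝ):ℂ) * ζ * (1 - (r:ℂ)))) ^ 3 / 3
            + (r:ℂ) * ((K:ℝ):ℂ) ^ 3 * ζ ^ 3 * (1 - (r:ℂ)) ^ 4
            + (r:ℂ) ^ 3 * (((K:ℝ):ℂ) * ζ * ((ξi:ℝ):ℂ)) ^ 3 / 3)
            * (1 + ((vt:ℝ):ℂ) * ((ut:ℝ):ℂ) + (((vt:ℝ):ℂ) * ((ut:ℝ):ℂ)) ^ 2)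
          + (-(r:ℂ) * ((c₂:ℝ):ℂ) * (s:ℂ) * (-(((K:ℝ):ℂ) * ζ * (1 - (r:ℂ)))))
          + ((r:ℂ) * ((c₂:ℝ):ℂ) * (s:ℂ) * (-(((K:ℝ):ℂ) * ζ * (1 - (r:ℂ)))) ^ 2 / 2) * ((ut:ℝ):ℂ)
          + (-(r:ℂ) * ((c₂:ℝ):ℂ) * (s:ℂ) * (-(((K:ℝ):ℂ) * ζ * (1 - (r:ℂ)))) ^ 3 / 3) * ((ut:ℝ):ℂ) ^ 2) * e1c)
        + (((r:ℂ) ^ 2 * ((K:ℝ):ℂ) * ζ * ((vt:ℝ):ℂ) ^ 2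
            - (r:ℂ) * ((K:ℝ):ℂ) ^ 2 * ζ ^ 2 * ((r:ℂ) * ((ξi:ℝ):ℂ) - (1 - (r:ℂ))) / 2 * ((vt:ℝ):ℂ)
            + ((K:ℝ):ℂ) ^ 3 * ζ ^ 3 * (((r:ℂ) * ((ξi:ℝ):ℂ)) ^ 2
              - (r:ℂ) * ((ξi:ℝ):ℂ) * (1 - (r:ℂ)) + (1 - (r:ℂ)) ^ 2) / 3) * hξiR)
        + ((r:ℂ) * (s:ℂ) * ζ) * hk1c
        + (-(ζ ^ 3) / 3) * hK3c
    have hc' := mul_left_cancel₀ hrc0 hc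
    linear_combination H1 * ha + H2 * hb + hc'
  -- limits of each piece
  have T_poly : Tendsto (fun t : ℝ => (s:ℂ) * ζ - ζ ^ 3 / 3 + C2 * ((t ^ (-(1/3) : ℝ) : ℝ) : ℂ)
      + C3 * ((t ^ (-(1/3) : ℝ) : ℝ) : ℂ) ^ 2) atTop (𝓝 ((s:ℂ) * ζ - ζ ^ 3 / 3)) := by
    have h := (tendsto_const_nhds (x := (s:ℂ) * ζ - ζ ^ 3 / 3) (f := atTop)).add
      ((hu0.const_mul C2).add ((hu0.pow 2).const_mul C3))
    simpa [add_assoc] using h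
  have hH1 : Tendsto (fun t : ℝ => hTW (cz1 * ((t ^ (-(1/3) : ℝ) : ℝ) : ℂ))) atTop (𝓝 0) := by
    have h1 : Tendsto (fun t : ℝ => cz1 * ((t ^ (-(1/3) : ℝ) : ℝ) : ℂ)) atTop (𝓝 0) := by
      simpa using hu0.const_mul cz1
    exact hTW_tendsto.comp h1
  have hH2 : Tendsto (fun t : ℝ => hTW (cz2 * ((t ^ (-(1/3) : ℝ) : ℝ) : ℂ))) atTop (𝓝 0) := by
    have h1 : Tendsto (fun t : ℝ => cz2 * ((t ^ (-(1/3) : ℝ) : ℝ) : ℂ)) atTop (𝓝 0) := by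
      simpa using hu0.const_mul cz2
    exact hTW_tendsto.comp h1
  have T_R1 : Tendsto (fun t : ℝ => (-(cz1 ^ 3) * (((c₁:ℝ):ℂ)
      + ((c₂:ℝ):ℂ) * (s:ℂ) * ((t ^ (-(1/3) : ℝ) : ℝ) : ℂ) ^ 2))
      * hTW (cz1 * ((t ^ (-(1/3) : ℝ) : ℝ) : ℂ))) atTop (𝓝 0) := by
    have h1 : Tendsto (fun t : ℝ => -(cz1 ^ 3) * (((c₁:ℝ):ℂ)
        + ((c₂:ℝ):ℂ) * (s:ℂ) * ((t ^ (-(1/3) : ℝ) : ℝ) : ℂ) ^ 2)) atTop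
        (𝓝 (-(cz1 ^ 3) * (((c₁:ℝ):ℂ) + ((c₂:ℝ):ℂ) * (s:ℂ) * (0:ℂ) ^ 2))) := by
      have := ((hu0.pow 2).const_mul (((c₂:ℝ):ℂ) * (s:ℂ))).const_add ((c₁:ℝ):ℂ)
      exact this.const_mul _
    simpa using h1.mul hH1
  have T_R2 : Tendsto (fun t : ℝ => (((σ:ℝ):ℂ) * cz2 ^ 3)
      * hTW (cz2 * ((t ^ (-(1/3) : ℝ) : ℝ) : ℂ))) atTop (𝓝 0) := by
    simpa using hH2.const_mul (((σ:ℝ):ℂ) * cz2 ^ 3)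
  have T_R3 : Tendsto (fun t : ℝ => ((K:ℝ):ℂ) ^ 4 * ζ ^ 4 * ((t ^ (-(1/3) : ℝ) : ℝ) : ℂ)
      / (((A:ℝ):ℂ) ^ 4 * (((A:ℝ):ℂ) - ((K:ℝ):ℂ) * ((t ^ (-(1/3) : ℝ) : ℝ) : ℂ) * ζ)))
      atTop (𝓝 0) := by
    have hnum : Tendsto (fun t : ℝ => ((K:ℝ):ℂ) ^ 4 * ζ ^ 4 * ((t ^ (-(1/3) : ℝ) : ℝ) : ℂ))
        atTop (𝓝 0) := by simpa using hu0.const_mul (((K:ℝ):ℂ) ^ 4 * ζ ^ 4)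
    have hden : Tendsto (fun t : ℝ => ((A:ℝ):ℂ) ^ 4
        * (((A:ℝ):ℂ) - ((K:ℝ):ℂ) * ((t ^ (-(1/3) : ℝ) : ℝ) : ℂ) * ζ)) atTop
        (𝓝 (((A:ℝ):ℂ) ^ 4 * (((A:ℝ):ℂ) - 0))) := by
      exact ((tendsto_const_nhds.sub hε0)).const_mul _
    have hdenne : ((A:ℝ):ℂ) ^ 4 * (((A:ℝ):ℂ) - 0) ≠ 0 := by
      rw [sub_zero]
      exact mul_ne_zero (pow_ne_zero 4 hAc0) hAc0
    have := hnum.div hden hdenne; rw [zero_div] at this; exact this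
  have Tfull := T_poly.add ((T_R1.add T_R2).add T_R3)
  rw [show -ζ ^ 3 / 3 + (s:ℂ) * ζ
      = ((s:ℂ) * ζ - ζ ^ 3 / 3) + (((0:ℂ) + 0) + 0) by ring]
  exact Tendsto.congr' (master.mono fun t h => h.symm) Tfull
end
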